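/- arXiv:1202.6461 — 11 statements merged into one kernel-verified Lean document; each statement's English description precedes it below -/
import Mathlib

section
/- Let D be an acyclic orientation of a graph G and let u be a source of D (a vertex with no ingoing arcs). Then the orientation D' obtained by reversing all arcs outgoing from u is again acyclic. -/
variable {V : Type*}

/-- An orientation of a simple graph `G`: each edge gets exactly one direction. -/
structure Orient (G : SimpleGraph V) where
  dir : V → V → Prop
  dir_adj : ∀ u v, dir u v → G.Adj u v
  adj_dir : ∀ u v, G.Adj u v → dir u v ∨ dir v u
  asymm : ∀ u v, dir u v → ¬ dir v u

/-- The relation obtained from `dir` by reversing the single arc `u → v`. -/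
def reverseArc (dir : V → V → Prop) (u v : V) : V → V → Prop :=
  fun a b => (dir a b ∧ ¬(a = u ∧ b = v)) ∨ (a = v ∧ b = u)

/-- A relation is acyclic if there is no directed cycle. -/
def IsAcyclicRel (dir : V → V → Prop) : Prop :=
  ∀ u v, dir u v → ¬ Relation.ReflTransGen dir v u

/-- An arc `u → v` is dependent if its reversal creates a directed cycle. -/
def DependentArc (dir : V → V → Prop) (u v : V) : Prop :=
  dir u v ∧ ¬ IsAcyclicRel (reverseArc dir u v)

/-- A cover graph admits an acyclic orientation with no dependent arcs. -/
def IsCoverGraph (G : SimpleGraph V) : Prop :=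
  ∃ D : Orient G, IsAcyclicRel D.dir ∧ ∀ u v, ¬ DependentArc D.dir u v

/-- The number of dependent arcs of an orientation. -/
noncomputable def numDependent {G : SimpleGraph V} (D : Orient G) : ℕ :=
  Set.ncard {p : V × V | DependentArc D.dir p.1 p.2}

/-- `d_min`: minimum number of dependent arcs over all acyclic orientations. -/
noncomputable def dmin (G : SimpleGraph V) : ℕ :=
  sInf {n | ∃ D : Orient G, IsAcyclicRel D.dir ∧ numDependent D = n}

/-- `d_max`: maximum number of dependent arcs over all acyclic orientations. -/
noncomputable def dmax (G : SimpleGraph V) : ℕ :=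
  sSup {n | ∃ D : Orient G, IsAcyclicRel D.dir ∧ numDependent D = n}

/-- `c(G)`: minimum number of edges to delete from `G` to get a cover graph. -/
noncomputable def coverDeletion (G : SimpleGraph V) : ℕ :=
  sInf {n | ∃ F : Set (Sym2 V), F ⊆ G.edgeSet ∧ IsCoverGraph (G.deleteEdges F) ∧ F.ncard = n}

/-- The generalized Mycielski graph `M_m(G)`; `none` is the apex `u`,
`some (i, a)` is the vertex `⟨i, a⟩`. -/
def genMycielski (G : SimpleGraph V) (m : ℕ) : SimpleGraph (Option (Fin (m + 1) × V)) where
  Adj x y :=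
    match x, y with
    | some (i, a), some (j, b) =>
        G.Adj a b ∧ ((i = j ∧ (i : ℕ) = 0) ∨ (i : ℕ) + 1 = (j : ℕ) ∨ (j : ℕ) + 1 = (i : ℕ))
    | some (i, _), none => (i : ℕ) = m
    | none, some (j, _) => (j : ℕ) = m
    | none, none => False
  symm := by
    constructor
    rintro (_ | ⟨i, a⟩) (_ | ⟨j, b⟩) h
    · exact h
    · exact h
    · exact h
    · refine ⟨h.1.symm, ?_⟩
      rcases h.2 with ⟨h1, h2⟩ | h' | h'
      · exact Or.inl ⟨h1.symm, h1 ▸ h2⟩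
      · exact Or.inr (Or.inr h')
      · exact Or.inr (Or.inl h')
  loopless := by
    constructor
    rintro (_ | ⟨i, a⟩) h <;> simp_all

/-- Source reversal at `u`: all arcs outgoing from `u` are reversed. -/
def srev (dir : V → V → Prop) (u : V) : V → V → Prop :=
  fun a b => (dir a b ∧ a ≠ u) ∨ (dir b a ∧ b = u)

/-- A source: a vertex with no ingoing arcs. -/
def IsSource (dir : V → V → Prop) (u : V) : Prop := ∀ v, ¬ dir v u

theorem srev_acyclic {G : SimpleGraph V} (D : Orient G)
    (hD : IsAcyclicRel D.dir) (u : V) (hu : IsSource D.dir u) :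
    IsAcyclicRel (srev D.dir u) := by
  intro a b hab hba
  -- u is a sink in the reversed orientation
  have sink : ∀ c, ¬ srev D.dir u u c := by
    rintro c (⟨h, hne⟩ | ⟨h, _⟩)
    · exact hne rfl
    · exact hu c h
  -- paths starting away from u either stay in D.dir or end at u
  have key : ∀ x y, Relation.ReflTransGen (srev D.dir u) x y → x ≠ u →
      Relation.ReflTransGen D.dir x y ∨ y = u := by
    intro x y h hx
    induction h with
    | refl => exact Or.inl Relation.ReflTransGen.refl
    | tail h₁ h₂ ih =>
      rcases ih with ih | rfl
      · rcases h₂ with ⟨hbc, _⟩ | ⟨_, hc⟩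
        · exact Or.inl (ih.tail hbc)
        · exact Or.inr hc
      · exact absurd h₂ (sink _)
  rcases hab with ⟨hab, ha⟩ | ⟨hba', rfl⟩
  · -- b ≠ u since u is a source
    have hb : b ≠ u := fun h => hu a (h ▸ hab)
    rcases key b a hba hb with h | h
    · exact hD a b hab h
    · exact ha h
  · -- path from u must be trivial
    rcases Relation.ReflTransGen.cases_head hba with rfl | ⟨c, hc, _⟩
    · exact (D.dir_adj _ _ hba').ne rfl
    · exact sink c hc
end

section
/- Let D be an acyclic orientation of a graph G with no dependent arcs, and let D' be obtained from D by a source-reversal at a source u. Then D' has no dependent arcs. -/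
variable {V : Type*}

open Relation in
private lemma relB_aux {dir : V → V → Prop} {x y : V} :
    ∀ {a b : V}, Relation.ReflTransGen (reverseArc dir x y) a b →
      Relation.ReflTransGen (fun p q => dir p q ∧ ¬(p = x ∧ q = y)) a b ∨
      (Relation.ReflTransGen (fun p q => dir p q ∧ ¬(p = x ∧ q = y)) a y ∧
       Relation.ReflTransGen (fun p q => dir p q ∧ ¬(p = x ∧ q = y)) x b) := by
  intro a b h
  induction h using Relation.ReflTransGen.head_induction_on with
  | refl => exact Or.inl .refl
  | head hac hcb ih =>
    rcases hac with ⟨hd, hne⟩ | ⟨ha, hc⟩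
    · rcases ih with h1 | ⟨h1, h2⟩
      · exact Or.inl (h1.head ⟨hd, hne⟩)
      · exact Or.inr ⟨h1.head ⟨hd, hne⟩, h2⟩
    · subst ha; subst hc
      rcases ih with h1 | ⟨h1, h2⟩
      · exact Or.inr ⟨.refl, h1⟩
      · exact Or.inr ⟨.refl, h2⟩

private lemma dep_path {dir : V → V → Prop} (hacy : IsAcyclicRel dir) {x y : V}
    (h : DependentArc dir x y) :
    Relation.ReflTransGen (fun p q => dir p q ∧ ¬(p = x ∧ q = y)) x y := by
  obtain ⟨hxy, hn⟩ := h
  unfold IsAcyclicRel at hn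
  push_neg at hn
  obtain ⟨p, q, hpq, hqp⟩ := hn
  rcases relB_aux hqp with h1 | ⟨h1, h2⟩
  · rcases hpq with ⟨hd, hne⟩ | ⟨hp, hq⟩
    · exact absurd (Relation.ReflTransGen.mono (fun a b h => h.1) _ _ h1) (hacy p q hd)
    · subst hp; subst hq; exact h1
  · rcases hpq with ⟨hd, hne⟩ | ⟨hp, hq⟩
    · exact ((h2.tail ⟨hd, hne⟩).trans h1)
    · subst hp; subst hq; exact h1

theorem srev_no_dependent {G : SimpleGraph V} (D : Orient G)
    (hD : IsAcyclicRel D.dir) (hnd : ∀ a b, ¬ DependentArc D.dir a b)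
    (u : V) (hu : IsSource D.dir u) :
    ∀ a b, ¬ DependentArc (srev D.dir u) a b := by
  intro x y hdep
  have husink : ∀ w, ¬ srev D.dir u u w := by
    rintro w (⟨_, h⟩ | ⟨h, _⟩)
    · exact h rfl
    · exact hu w h
  -- paths in srev avoiding u as endpoint consist of original arcs not leaving u
  have hpath : ∀ a b, Relation.ReflTransGen (srev D.dir u) a b → b ≠ u →
      Relation.ReflTransGen (fun p q => D.dir p q ∧ p ≠ u) a b := by
    intro a b h hb
    induction h using Relation.ReflTransGen.head_induction_on with
    | refl => exact .refl
    | head hac hcb ih =>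
      rcases hac with ⟨hd, ha⟩ | ⟨hd, hc⟩
      · exact ih.head ⟨hd, ha⟩
      · subst hc
        rcases hcb.cases_head with h | ⟨w, hw, _⟩
        · exact absurd h.symm hb
        · exact absurd hw (husink w)
  have hacy' : IsAcyclicRel (srev D.dir u) := by
    intro p q hpq hqp
    have hpu : p ≠ u := fun h => husink q (h ▸ hpq)
    have h2 := hpath q p hqp hpu
    rcases hpq with ⟨hd, _⟩ | ⟨hd, hq⟩
    · exact hD p q hd (Relation.ReflTransGen.mono (fun a b h => h.1) _ _ h2)
    · subst hq
      rcases h2.cases_head with h | ⟨w, ⟨_, hw⟩, _⟩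
      · exact hpu h.symm
      · exact hw rfl
  have P := dep_path hacy' hdep
  obtain ⟨hxy', -⟩ := hdep
  rcases hxy' with ⟨hxy, hxu⟩ | ⟨hux, hy⟩
  · -- Case A: arc x → y with x ≠ u, D.dir x y
    have hyu : y ≠ u := fun h => hu x (h ▸ hxy)
    -- convert P into a path avoiding arc (x,y) in D.dir
    have conv : ∀ a, Relation.ReflTransGen
        (fun p q => srev D.dir u p q ∧ ¬(p = x ∧ q = y)) a y →
        Relation.ReflTransGen (fun p q => D.dir p q ∧ ¬(p = x ∧ q = y)) a y := by
      intro a h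
      induction h using Relation.ReflTransGen.head_induction_on with
      | refl => exact .refl
      | head hac hcb ih =>
        obtain ⟨hsr, hne⟩ := hac
        rcases hsr with ⟨hd, _⟩ | ⟨hd, hc⟩
        · exact ih.head ⟨hd, hne⟩
        · subst hc
          rcases hcb.cases_head with h | ⟨w, ⟨hw, _⟩, _⟩
          · exact absurd h.symm hyu
          · exact absurd hw (husink w)
    have hP := conv x P
    refine hnd x y ⟨hxy, fun hA => hA y x (Or.inr ⟨rfl, rfl⟩) ?_⟩
    exact Relation.ReflTransGen.mono (fun a b h => Or.inl ⟨h.1, h.2⟩) _ _ hP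
  · -- Case B: arc x → y with D.dir y x
    subst hy
    have hxu : x ≠ y := fun h => hD y y (h ▸ hux) .refl
    -- extract last-arc structure
    have extract : ∀ a, a ≠ y → Relation.ReflTransGen
        (fun p q => srev D.dir y p q ∧ ¬(p = x ∧ q = y)) a y →
        ∃ w, w ≠ x ∧ D.dir y w ∧
          Relation.ReflTransGen (fun p q => D.dir p q ∧ p ≠ y) a w := by
      intro a ha h
      induction h using Relation.ReflTransGen.head_induction_on with
      | refl => exact absurd rfl ha
      | @head a' c hac hcb ih =>
        obtain ⟨hsr, hne⟩ := hac
        rcases hsr with ⟨hd, _⟩ | ⟨hd, hc⟩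
        · have hcu : c ≠ y := by rintro rfl; exact hu _ hd
          obtain ⟨w, h1, h2, h3⟩ := ih hcu
          exact ⟨w, h1, h2, h3.head ⟨hd, ha⟩⟩
        · exact ⟨_, fun h => hne ⟨h, hc⟩, hc ▸ hd, .refl⟩
    obtain ⟨w, hwx, huw, hpw⟩ := extract x hxu P
    refine hnd y w ⟨huw, fun hA => hA w y (Or.inr ⟨rfl, rfl⟩) ?_⟩
    refine Relation.ReflTransGen.head (Or.inl ⟨hux, fun h => hwx h.2.symm⟩) ?_
    exact Relation.ReflTransGen.mono (fun a b h => Or.inl ⟨h.1, fun hh => h.2 hh.1⟩) _ _ hpw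
end

section
/- Let D be an acyclic orientation of a connected graph G. For any vertex u of G, there exists an acyclic orientation D' of G obtained from D by a finite sequence of source-reversals such that u is the unique source of D'. -/
variable {V : Type*}

/-- One step of source-reversal between relations. -/
def SrevStep (d d' : V → V → Prop) : Prop :=
  ∃ u, IsSource d u ∧ d' = srev d u

section Aux

variable {G : SimpleGraph V}

/-- Source reversal of an orientation is again an orientation. -/
def srevO (O : Orient G) (s : V) : Orient G where
  dir := srev O.dir s
  dir_adj := by
    rintro a b (⟨h, -⟩ | ⟨h, -⟩)
    · exact O.dir_adj _ _ h
    · exact (O.dir_adj _ _ h).symm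
  adj_dir := by
    intro a b hab
    rcases O.adj_dir a b hab with h | h
    · by_cases ha : a = s
      · exact Or.inr (Or.inr ⟨h, ha⟩)
      · exact Or.inl (Or.inl ⟨h, ha⟩)
    · by_cases hb : b = s
      · exact Or.inl (Or.inr ⟨h, hb⟩)
      · exact Or.inr (Or.inl ⟨h, hb⟩)
  asymm := by
    rintro a b (⟨h1, h2⟩ | ⟨h1, h2⟩) (⟨h3, h4⟩ | ⟨h3, h4⟩)
    · exact O.asymm _ _ h1 h3
    · exact h2 h4
    · exact h4 h2
    · exact O.asymm _ _ h3 h1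

lemma srev_no_out {d : V → V → Prop} {s : V} (hs : IsSource d s) (b : V) :
    ¬ srev d s s b := by
  rintro (⟨-, h⟩ | ⟨h1, h2⟩)
  · exact h rfl
  · exact hs s (h2 ▸ h1)

lemma srev_eq_of_rtg {d : V → V → Prop} {s a : V} (hs : IsSource d s)
    (h : Relation.ReflTransGen (srev d s) s a) : a = s := by
  rcases h.cases_head with h' | ⟨c, hc, -⟩
  · exact h'.symm
  · exact absurd hc (srev_no_out hs c)

lemma rtg_srev {d : V → V → Prop} {s : V} (hs : IsSource d s) {b a : V}
    (h : Relation.ReflTransGen (srev d s) b a) (ha : a ≠ s) :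
    Relation.ReflTransGen d b a := by
  induction h using Relation.ReflTransGen.head_induction_on with
  | refl => exact .refl
  | head hbc hca ih =>
      rename_i x c
      by_cases hc : c = s
      · exact absurd (srev_eq_of_rtg hs (hc ▸ hca)) ha
      · rcases hbc with ⟨h1, -⟩ | ⟨-, h2⟩
        · exact .head h1 ih
        · exact absurd h2 hc

lemma srev_acyclic_s3 {d : V → V → Prop} {s : V} (hd : IsAcyclicRel d)
    (hs : IsSource d s) : IsAcyclicRel (srev d s) := by
  rintro a b (⟨h1, h2⟩ | ⟨h1, h2⟩) hba
  · exact hd a b h1 (rtg_srev hs hba h2)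
  · subst h2
    have := srev_eq_of_rtg hs hba
    subst this
    exact hs a h1

/-- Apply a list of source reversals. -/
def applyO (O : Orient G) : List V → Orient G
  | [] => O
  | s :: l => applyO (srevO O s) l

/-- A valid firing sequence avoiding `u`: each fired vertex is a source ≠ `u`. -/
def Valid (u : V) : Orient G → List V → Prop
  | _, [] => True
  | O, s :: l => IsSource O.dir s ∧ s ≠ u ∧ Valid u (srevO O s) l

lemma valid_rtg {u : V} : ∀ (l : List V) (O : Orient G), Valid u O l →
    Relation.ReflTransGen SrevStep O.dir (applyO O l).dir
  | [], _, _ => .refl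
  | s :: l, O, ⟨hs, _, hv⟩ => .head ⟨s, hs, rfl⟩ (valid_rtg l (srevO O s) hv)

lemma valid_acyclic {u : V} : ∀ (l : List V) (O : Orient G), Valid u O l →
    IsAcyclicRel O.dir → IsAcyclicRel (applyO O l).dir
  | [], _, _, h => h
  | s :: l, O, ⟨hs, _, hv⟩, h => valid_acyclic l _ hv (srev_acyclic_s3 h hs)

lemma valid_append {u : V} : ∀ (l l' : List V) (O : Orient G),
    Valid u O (l ++ l') ↔ Valid u O l ∧ Valid u (applyO O l) l'
  | [], l', O => by simp [Valid, applyO]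
  | s :: l, l', O => by
      simp [Valid, applyO, valid_append l l' (srevO O s), and_assoc]

lemma valid_not_mem {u : V} : ∀ (l : List V) (O : Orient G), Valid u O l → u ∉ l
  | [], _, _ => List.not_mem_nil
  | s :: l, O, ⟨_, hsu, hv⟩ => by
      simp only [List.mem_cons, not_or]
      exact ⟨fun h => hsu h.symm, valid_not_mem l _ hv⟩

/-- The key invariant: for an arc `a → b` of the initial orientation, the firing
counts of `a` and `b` differ by at most one, and the parity of their difference
determines the current direction of the edge. -/
lemma valid_invar [DecidableEq V] {u : V} : ∀ (l : List V) (O : Orient G),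
    Valid u O l → ∀ a b, O.dir a b →
      (l.count b ≤ l.count a ∧ l.count a ≤ l.count b + 1) ∧
      (l.count a = l.count b → (applyO O l).dir a b) ∧
      (l.count a = l.count b + 1 → (applyO O l).dir b a)
  | [], O, _, a, b, hab => by
      simp only [List.count_nil, applyO]
      exact ⟨⟨le_rfl, Nat.le_succ 0⟩, fun _ => hab, fun h => absurd h (by omega)⟩
  | s :: l, O, ⟨hs, hsu, hv⟩, a, b, hab => by
      by_cases has : a = s
      · subst has
        have hbs : b ≠ a := (O.dir_adj _ _ hab).ne'
        have hdir : (srevO O a).dir b a := Or.inr ⟨hab, rfl⟩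
        obtain ⟨⟨h1, h2⟩, h3, h4⟩ := valid_invar l (srevO O a) hv b a hdir
        rw [List.count_cons_self, List.count_cons_of_ne hbs.symm]
        exact ⟨⟨h2, by omega⟩, fun h => h4 (by omega), fun h => h3 (by omega)⟩
      · by_cases hbs : b = s
        · subst hbs
          exact absurd hab (hs a)
        · have hdir : (srevO O s).dir a b := Or.inl ⟨hab, has⟩
          rw [List.count_cons_of_ne (Ne.symm has), List.count_cons_of_ne (Ne.symm hbs)]
          exact valid_invar l (srevO O s) hv a b hdir

lemma valid_adj_bound [DecidableEq V] {u : V} {l : List V} {O : Orient G}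
    (hv : Valid u O l) {a b : V} (hab : G.Adj a b) :
    l.count a ≤ l.count b + 1 := by
  rcases O.adj_dir a b hab with h | h
  · exact ((valid_invar l O hv a b h).1).2
  · exact le_trans ((valid_invar l O hv b a h).1).1 (Nat.le_succ _)

lemma valid_count_le_walk [DecidableEq V] {u : V} {l : List V} {O : Orient G}
    (hv : Valid u O l) : ∀ {x : V} (p : G.Walk x u), l.count x ≤ p.length := by
  suffices H : ∀ {x y : V} (p : G.Walk x y), y = u → l.count x ≤ p.length by
    intro x p; exact H p rfl
  intro x y p
  induction p with
  | nil =>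
      rintro rfl
      exact Nat.le_of_eq (List.count_eq_zero_of_not_mem (valid_not_mem l O hv))
  | cons h q ih =>
      intro hy
      rw [SimpleGraph.Walk.length_cons]
      exact le_trans (valid_adj_bound hv h) (Nat.succ_le_succ (ih hy))

lemma length_eq_sum_count [DecidableEq V] [Fintype V] (l : List V) :
    l.length = ∑ v, l.count v := by
  induction l with
  | nil => simp
  | cons s l ih =>
      simp only [List.count_cons, List.length_cons, ih, Finset.sum_add_distrib]
      simp

lemma exists_source_of_acyclic [Finite V] [Nonempty V] {d : V → V → Prop}
    (hd : IsAcyclicRel d) : ∃ s, IsSource d s := by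
  haveI : IsTrans V (Relation.TransGen d) := ⟨fun _ _ _ h h' => h.trans h'⟩
  haveI : IsIrrefl V (Relation.TransGen d) := ⟨fun a h => by
    cases h with
    | single h' => exact hd a a h' .refl
    | tail h' hba => exact hd _ _ hba h'.to_reflTransGen⟩
  have wf : WellFounded (Relation.TransGen d) :=
    Finite.wellFounded_of_trans_of_irrefl _
  obtain ⟨s, -, hmin⟩ := wf.has_min Set.univ Set.univ_nonempty
  exact ⟨s, fun v hv => hmin v (Set.mem_univ v) (.single hv)⟩

end Aux

theorem mosesian [Finite V] {G : SimpleGraph V} (hG : G.Connected)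
    (D : Orient G) (hD : IsAcyclicRel D.dir) (u : V) :
    ∃ D' : Orient G, Relation.ReflTransGen SrevStep D.dir D'.dir ∧
      IsAcyclicRel D'.dir ∧ IsSource D'.dir u ∧ ∀ w, IsSource D'.dir w → w = u := by
  classical
  haveI : Fintype V := Fintype.ofFinite V
  have hw : ∀ v : V, Nonempty (G.Walk v u) := fun v => hG.preconnected v u
  set N : ℕ := ∑ v, (hw v).some.length with hN
  have hbound : ∀ l : List V, Valid u D l → l.length ≤ N := by
    intro l hl
    rw [length_eq_sum_count l, hN]
    exact Finset.sum_le_sum fun v _ => valid_count_le_walk hl (hw v).some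
  set S : Set ℕ := {k | ∃ l : List V, Valid u D l ∧ l.length = k} with hSdef
  have hS0 : (0 : ℕ) ∈ S := ⟨[], trivial, rfl⟩
  have hSb : BddAbove S := by
    refine ⟨N, fun k hk => ?_⟩
    obtain ⟨l, hl, hlen⟩ := hk
    exact hlen ▸ hbound l hl
  have hmem : sSup S ∈ S := Nat.sSup_mem ⟨0, hS0⟩ hSb
  obtain ⟨l, hl, hlen⟩ := hmem
  have hac := valid_acyclic l D hl hD
  have huniq : ∀ w, IsSource (applyO D l).dir w → w = u := by
    intro w hwsrc
    by_contra hne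
    have hval : Valid u D (l ++ [w]) :=
      (valid_append l [w] D).2 ⟨hl, hwsrc, hne, trivial⟩
    have hmem' : l.length + 1 ∈ S := ⟨l ++ [w], hval, by simp⟩
    have := le_csSup hSb hmem'
    omega
  haveI : Nonempty V := ⟨u⟩
  obtain ⟨s, hs⟩ := exists_source_of_acyclic hac
  obtain rfl := huniq s hs
  exact ⟨applyO D l, valid_rtg l D hl, hac, hs, huniq⟩
end

section
/- If d_min(G) = 2, then c(G) = 2. -/
variable {V : Type*}

open Relation

lemma acyclic_mono {R S : V → V → Prop} (h : ∀ x y, R x y → S x y)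
    (hS : IsAcyclicRel S) : IsAcyclicRel R := by
  intro x y hxy hyx
  exact hS x y (h _ _ hxy) (ReflTransGen.mono h _ _ hyx)

lemma acyclic_antisymm {R : V → V → Prop} (hac : IsAcyclicRel R) {x y : V}
    (h1 : ReflTransGen R x y) (h2 : ReflTransGen R y x) : x = y := by
  rcases h1.cases_head with rfl | ⟨z, hxz, hzy⟩
  · rfl
  · exact absurd (hzy.trans h2) (hac x z hxz)

/-- remove one arc decomposition -/
lemma rt_remove {R : V → V → Prop} (a b : V) {p q : V} (h : ReflTransGen R p q) :
    ReflTransGen (fun x y => R x y ∧ ¬(x = a ∧ y = b)) p q ∨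
      (ReflTransGen (fun x y => R x y ∧ ¬(x = a ∧ y = b)) p a ∧
        ReflTransGen (fun x y => R x y ∧ ¬(x = a ∧ y = b)) b q) := by
  induction h with
  | refl => exact Or.inl ReflTransGen.refl
  | tail hpc hstep ih =>
    rename_i c q
    by_cases hab : c = a ∧ q = b
    · rcases hab with ⟨rfl, rfl⟩
      rcases ih with ih | ⟨ih1, _⟩
      · exact Or.inr ⟨ih, ReflTransGen.refl⟩
      · exact Or.inr ⟨ih1, ReflTransGen.refl⟩
    · rcases ih with ih | ⟨ih1, ih2⟩
      · exact Or.inl (ih.tail ⟨hstep, hab⟩)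
      · exact Or.inr ⟨ih1, ih2.tail ⟨hstep, hab⟩⟩

/-- union with single arc decomposition -/
lemma rt_add {R : V → V → Prop} (s t : V) {p q : V}
    (h : ReflTransGen (fun x y => R x y ∨ (x = s ∧ y = t)) p q) :
    ReflTransGen R p q ∨ (ReflTransGen R p s ∧ ReflTransGen R t q) := by
  induction h with
  | refl => exact Or.inl ReflTransGen.refl
  | tail hpc hstep ih =>
    rcases hstep with hstep | ⟨rfl, rfl⟩
    · rcases ih with ih | ⟨ih1, ih2⟩
      · exact Or.inl (ih.tail hstep)
      · exact Or.inr ⟨ih1, ih2.tail hstep⟩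
    · rcases ih with ih | ⟨ih1, _⟩
      · exact Or.inr ⟨ih, ReflTransGen.refl⟩
      · exact Or.inr ⟨ih1, ReflTransGen.refl⟩

/-- from a cycle created by reversing (a,b), extract a path a ⇝ b avoiding (a,b). -/
lemma cycle_extract {R : V → V → Prop} {a b : V} (hac : IsAcyclicRel R)
    (h : ¬ IsAcyclicRel (reverseArc R a b)) :
    ReflTransGen (fun x y => R x y ∧ ¬(x = a ∧ y = b)) a b := by
  set R0 : V → V → Prop := fun x y => R x y ∧ ¬(x = a ∧ y = b) with hR0
  have hR0sub : ∀ x y, R0 x y → R x y := fun x y h => h.1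
  simp only [IsAcyclicRel, not_forall, not_not] at h
  obtain ⟨x, y, hxy, hyx⟩ := h
  have hdec : ∀ p q : V, ReflTransGen (reverseArc R a b) p q →
      ReflTransGen R0 p q ∨ (ReflTransGen R0 p b ∧ ReflTransGen R0 a q) := by
    intro p q hpq
    have : ReflTransGen (fun x y => R0 x y ∨ (x = b ∧ y = a)) p q := by
      exact ReflTransGen.mono (fun x y hxy => hxy) _ _ hpq
    exact rt_add b a this
  have hnocyc : ∀ p q : V, R0 p q → ReflTransGen R0 q p → False := by
    intro p q h1 h2 ; exact hac p q (hR0sub _ _ h1) (ReflTransGen.mono hR0sub _ _ h2)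
  rcases hxy with hxy | ⟨rfl, rfl⟩
  · rcases hdec _ _ hyx with h1 | ⟨h1, h2⟩
    · exact absurd h1 (fun hh => hnocyc _ _ hxy hh)
    · exact (h2.tail hxy).trans h1
  · rcases hdec _ _ hyx with h1 | ⟨_, h2⟩
    · exact h1
    · exact h2

/-- Lemma X: a strict intermediate point of an arc contradicts independence. -/
lemma dep_of_mid {R : V → V → Prop} (hac : IsAcyclicRel R)
    (hnd : ∀ p q, ¬ DependentArc R p q) {a b z : V} (hab : R a b)
    (h1 : ReflTransGen R a z) (h2 : ReflTransGen R z b)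
    (hza : z ≠ a) (hzb : z ≠ b) : False := by
  set R0 : V → V → Prop := fun x y => R x y ∧ ¬(x = a ∧ y = b) with hR0
  have hR0sub : ∀ x y, R0 x y → R x y := fun x y h => h.1
  rcases rt_remove a b h1 with c1 | ⟨_, c1⟩
  · rcases rt_remove a b h2 with c2 | ⟨c2, _⟩
    · -- R0 path a → z → b : dependent
      refine hnd a b ⟨hab, ?_⟩
      simp only [IsAcyclicRel, not_forall, not_not]
      refine ⟨b, a, Or.inr ⟨rfl, rfl⟩, ?_⟩
      exact ReflTransGen.mono (fun x y h => Or.inl h) _ _ (c1.trans c2)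
    · -- z ⇝ a and a ⇝ z
      exact hza (acyclic_antisymm hac (ReflTransGen.mono hR0sub _ _ c2) h1)
  · -- b ⇝ z and z ⇝ b
    exact hzb (acyclic_antisymm hac h2 (ReflTransGen.mono hR0sub _ _ c1))

lemma easy_case (G : SimpleGraph V) {u v : V} (huv : G.Adj u v)
    (H : SimpleGraph V)
    (hH : ∀ x y, H.Adj x y ↔ G.Adj x y ∧ ¬(x = u ∧ y = v) ∧ ¬(x = v ∧ y = u))
    (D₀ : Orient H) (hac : IsAcyclicRel D₀.dir)
    (hnd : ∀ p q, ¬ DependentArc D₀.dir p q)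
    (hRT : ReflTransGen D₀.dir u v) :
    ∃ D : Orient G, IsAcyclicRel D.dir ∧ numDependent D ≤ 1 := by
  set R0 := D₀.dir with hR0def
  have hnotH : ∀ x y : V, ((x = u ∧ y = v) ∨ (x = v ∧ y = u)) → ¬ R0 x y := by
    rintro x y h hd
    have h2 := (hH x y).mp (D₀.dir_adj x y hd)
    rcases h with h | h
    · exact h2.2.1 h
    · exact h2.2.2 h
  have hne : u ≠ v := huv.ne
  have hvu_false : ReflTransGen R0 v u → False := fun hh =>
    hne (acyclic_antisymm hac hRT hh)
  set Rd : V → V → Prop := fun x y => R0 x y ∨ (x = u ∧ y = v) with hRd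
  have hacD : IsAcyclicRel Rd := by
    intro x y hxy hyx
    rcases rt_add u v hyx with hp | ⟨h1, h2⟩
    · rcases hxy with hxy | ⟨rfl, rfl⟩
      · exact hac x y hxy hp
      · exact hvu_false hp
    · rcases hxy with hxy | ⟨rfl, rfl⟩
      · exact hvu_false ((h2.tail hxy).trans h1)
      · exact hvu_false h1
  refine ⟨⟨Rd, ?_, ?_, ?_⟩, hacD, ?_⟩
  · rintro x y (h | ⟨rfl, rfl⟩)
    · exact ((hH x y).mp (D₀.dir_adj x y h)).1
    · exact huv
  · intro x y hxy
    by_cases h1 : x = u ∧ y = v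
    · exact Or.inl (Or.inr h1)
    · by_cases h2 : x = v ∧ y = u
      · exact Or.inr (Or.inr ⟨h2.2, h2.1⟩)
      · rcases D₀.adj_dir x y ((hH x y).mpr ⟨hxy, h1, h2⟩) with h | h
        · exact Or.inl (Or.inl h)
        · exact Or.inr (Or.inl h)
  · rintro x y h h'
    rcases h with h | ⟨rfl, rfl⟩
    · rcases h' with h' | hh
      · exact D₀.asymm x y h h'
      · exact hnotH x y (Or.inr ⟨hh.2, hh.1⟩) h
    · rcases h' with h' | hh
      · exact hnotH _ _ (Or.inr ⟨rfl, rfl⟩) h'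
      · exact huv.ne' hh.1
  · -- numDependent ≤ 1
    show Set.ncard {p : V × V | DependentArc Rd p.1 p.2} ≤ 1
    have hsub : {p : V × V | DependentArc Rd p.1 p.2} ⊆ {(u, v)} := by
      rintro ⟨a, b⟩ ⟨hdir, hcyc⟩
      simp only [Set.mem_setOf_eq, Set.mem_singleton_iff, Prod.mk.injEq]
      rcases hdir with hab0 | ⟨rfl, rfl⟩
      swap
      · exact ⟨rfl, rfl⟩
      by_contra hnab
      rw [not_and] at hnab
      have habne : a ≠ b := (D₀.dir_adj a b hab0).ne
      have hext := cycle_extract hacD hcyc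
      set Q : V → V → Prop := fun x y => R0 x y ∧ ¬(x = a ∧ y = b) with hQ
      have hcast : ReflTransGen (fun x y => Q x y ∨ (x = u ∧ y = v)) a b := by
        refine ReflTransGen.mono ?_ _ _ hext
        rintro x y ⟨(h | ⟨rfl, rfl⟩), hno⟩
        · exact Or.inl ⟨h, hno⟩
        · exact Or.inr ⟨rfl, rfl⟩
      have hQsub : ∀ x y, Q x y → R0 x y := fun x y h => h.1
      have headcase : ReflTransGen Q a b → False := by
        intro hpath
        rcases hpath.cases_head with heq | ⟨z, hz, hzb⟩
        · exact habne heq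
        · have hza : z ≠ a := (D₀.dir_adj a z hz.1).ne.symm
          have hzb' : z ≠ b := fun hzb2 => hz.2 ⟨rfl, hzb2⟩
          exact dep_of_mid hac hnd hab0 (ReflTransGen.single hz.1)
            (ReflTransGen.mono hQsub _ _ hzb) hza hzb'
      rcases rt_add u v hcast with hp | ⟨h1, h2⟩
      · exact headcase hp
      · -- path a ⇝ u and v ⇝ b in Q
        have hau : ReflTransGen R0 a u := ReflTransGen.mono hQsub _ _ h1
        have hvb : ReflTransGen R0 v b := ReflTransGen.mono hQsub _ _ h2
        by_cases hub : u = b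
        · subst hub
          exact headcase h1
        · by_cases hua : u = a
          · subst hua
            have hvb' : v ≠ b := fun hv => hnab rfl hv.symm
            exact dep_of_mid hac hnd hab0 hRT hvb huv.ne' hvb'
          · exact dep_of_mid hac hnd hab0 hau (hRT.trans hvb)
              hua hub
    calc Set.ncard {p : V × V | DependentArc Rd p.1 p.2}
        ≤ Set.ncard {((u, v) : V × V)} := Set.ncard_le_ncard hsub (Set.finite_singleton _)
      _ = 1 := Set.ncard_singleton _

open SimpleGraph in
lemma hard_case [Finite V] (G : SimpleGraph V) {u v : V} (huv : G.Adj u v)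
    (H : SimpleGraph V)
    (hH : ∀ x y, H.Adj x y ↔ G.Adj x y ∧ ¬(x = u ∧ y = v) ∧ ¬(x = v ∧ y = u))
    (D₀ : Orient H) (hac : IsAcyclicRel D₀.dir)
    (hnd : ∀ p q, ¬ DependentArc D₀.dir p q)
    (hnuv : ¬ ReflTransGen D₀.dir u v) (hnvu : ¬ ReflTransGen D₀.dir v u) :
    ∃ D : Orient G, IsAcyclicRel D.dir ∧ numDependent D ≤ 1 := by
  classical
  letI : Fintype V := Fintype.ofFinite V
  set R0 := D₀.dir with hR0def
  set n := Fintype.card V with hn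
  set g : V → ℕ := fun x => ((Fintype.equivFin V) x : ℕ) with hg
  have hg_lt : ∀ x, g x < n := fun x => ((Fintype.equivFin V) x).isLt
  have hg_inj : Function.Injective g := fun x y h =>
    (Fintype.equivFin V).injective (Fin.ext h)
  have hnpos : 0 < n := lt_of_le_of_lt (Nat.zero_le _) (hg_lt u)
  have hirr : ∀ x, ¬ Relation.TransGen R0 x x := by
    intro x hx
    obtain ⟨c, hxc, hcx⟩ := (Relation.TransGen.head'_iff).mp hx
    exact hac x c hxc hcx
  set f : V → ℕ := fun x => Set.ncard {z | Relation.TransGen R0 z x} with hf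
  have hfmono : ∀ x y, R0 x y → f x < f y := by
    intro x y hxy
    have hss : {z | Relation.TransGen R0 z x} ⊂ {z | Relation.TransGen R0 z y} := by
      constructor
      · intro z hz
        exact hz.tail hxy
      · intro hsub
        exact hirr x (hsub (Relation.TransGen.single hxy))
    exact Set.ncard_lt_ncard hss (Set.toFinite _)
  have hfle : ∀ x, f x ≤ n := by
    intro x
    calc f x ≤ (Set.univ : Set V).ncard :=
          Set.ncard_le_ncard (Set.subset_univ _) (Set.toFinite _)
      _ = n := by rw [Set.ncard_univ, Nat.card_eq_fintype_card]
  set S : V → Prop := fun x => x ≠ u ∧ (ReflTransGen R0 x u ∨ ReflTransGen R0 x v)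
    with hS
  set M : V → ℕ := fun x =>
    if x = u then 0 else if x = v then 2*n+3 else if S x then f x + n + 2 else f x + 1
    with hM
  set M' : V → ℕ := fun x => M x * n + g x with hM'
  have hM'lt : ∀ x y, M x < M y → M' x < M' y := by
    intro x y h
    have h1 := hg_lt x
    have h2 := hg_lt y
    simp only [hM']
    nlinarith
  have hMle_of : ∀ x y, M' x < M' y → M x ≤ M y := by
    intro x y h
    by_contra hc
    push_neg at hc
    exact absurd (hM'lt y x hc) (by omega)
  have hM'inj : ∀ x y, M' x = M' y → x = y := by
    intro x y h
    have hMxy : M x = M y := by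
      rcases lt_trichotomy (M x) (M y) with hh | hh | hh
      · exact absurd (hM'lt x y hh) (by omega)
      · exact hh
      · exact absurd (hM'lt y x hh) (by omega)
    apply hg_inj
    simp only [hM', hMxy] at h
    omega
  have hSu : ¬ S u := fun h => h.1 rfl
  have hSv : S v := ⟨huv.ne', Or.inr Relation.ReflTransGen.refl⟩
  have hMu : M u = 0 := if_pos rfl
  have hMv : M v = 2*n+3 := by
    have : v ≠ u := huv.ne'
    simp [hM, this]
  have hMpos : ∀ x, x ≠ u → 1 ≤ M x := by
    intro x hx
    simp only [hM, if_neg hx]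
    split_ifs <;> omega
  have hMvmax : ∀ x, x ≠ v → M x ≤ 2*n+2 := by
    intro x hx
    have := hfle x
    simp only [hM, if_neg hx]
    split_ifs <;> omega
  have hMS : ∀ x, S x → x ≠ v → M x = f x + n + 2 := by
    intro x hx hxv
    simp only [hM, if_neg hx.1, if_neg hxv, if_pos hx]
  have hMT : ∀ x, ¬ S x → x ≠ u → M x = f x + 1 := by
    intro x hx hxu
    have hxv : x ≠ v := fun h => hx (h ▸ hSv)
    simp only [hM, if_neg hxu, if_neg hxv, if_neg hx]
  have hblock : ∀ x y, S x → ¬ S y → M y < M x := by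
    intro x y hx hy
    by_cases hyu : y = u
    · subst hyu
      rw [hMu]
      exact hMpos x hx.1
    · rw [hMT y hy hyu]
      have h1 := hfle y
      by_cases hxv : x = v
      · subst hxv; rw [hMv]; omega
      · rw [hMS x hx hxv]; omega
  have hSdown : ∀ x y, R0 x y → S y → S x := by
    rintro x y hxy ⟨hyu, hy⟩
    constructor
    · rintro rfl
      rcases hy with h | h
      · exact hac _ _ hxy h
      · exact hnuv (Relation.ReflTransGen.head hxy h)
    · rcases hy with h | h
      · exact Or.inl (Relation.ReflTransGen.head hxy h)
      · exact Or.inr (Relation.ReflTransGen.head hxy h)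
  set dir : V → V → Prop := fun x y => G.Adj x y ∧ M' x < M' y with hdirdef
  have hclass : ∀ x y, dir x y →
      (x = u ∧ y = v) ∨ (R0 x y ∧ (S x ↔ S y)) ∨ (R0 y x ∧ ¬ S x ∧ S y) := by
    rintro x y ⟨hadj, hlt⟩
    have hMxy : M x ≤ M y := hMle_of _ _ hlt
    rcases Classical.em (x = u ∧ y = v) with h1 | h1
    · exact Or.inl h1
    rcases Classical.em (x = v ∧ y = u) with h2 | h2
    · exfalso
      rw [h2.1, h2.2, hMv, hMu] at hMxy
      omega
    · have hHadj : H.Adj x y := (hH x y).mpr ⟨hadj, h1, h2⟩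
      rcases D₀.adj_dir x y hHadj with hd | hd
      · refine Or.inr (Or.inl ⟨hd, ?_, hSdown x y hd⟩)
        intro hSx
        by_contra hSy
        exact absurd (hblock x y hSx hSy) (by omega)
      · refine Or.inr (Or.inr ⟨hd, ?_⟩)
        by_cases hSx : S x <;> by_cases hSy : S y
        · exfalso
          by_cases hyv : y = v
          · rcases hSx.2 with h | h
            · exact hnvu (Relation.ReflTransGen.head (hyv ▸ hd) h)
            · exact hac v x (hyv ▸ hd) h
          · have hMyv := hMS y hSy hyv
            by_cases hxv : x = v
            · rw [hxv, hMv] at hMxy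
              have := hfle y
              omega
            · have hMxv := hMS x hSx hxv
              have := hfmono y x hd
              omega
        · exact absurd (hblock x y hSx hSy) (by omega)
        · exact ⟨hSx, hSy⟩
        · exfalso
          by_cases hxu : x = u
          · exact hSy ⟨fun h => (D₀.dir_adj y x hd).ne (h.trans hxu.symm), Or.inl (Relation.ReflTransGen.single (hxu ▸ hd))⟩
          · by_cases hyu : y = u
            · rw [hyu, hMu] at hMxy
              have := hMpos x hxu
              omega
            · rw [hMT x hSx hxu, hMT y hSy hyu] at hMxy
              have := hfmono y x hd
              omega
  have hstepS : ∀ x y, dir x y → S x → S y := by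
    intro x y hxy hSx
    rcases hclass x y hxy with ⟨rfl, rfl⟩ | ⟨_, hiff⟩ | ⟨_, hnx, _⟩
    · exact absurd hSx hSu
    · exact hiff.mp hSx
    · exact absurd hSx hnx
  have hrtS : ∀ p q, Relation.ReflTransGen dir p q → S p → S q := by
    intro p q hpq hSp
    induction hpq with
    | refl => exact hSp
    | tail _ hstep ih => exact hstepS _ _ hstep ih
  have hrtM' : ∀ p q, Relation.ReflTransGen dir p q → M' p ≤ M' q := by
    intro p q hpq
    induction hpq with
    | refl => exact le_refl _
    | tail _ hstep ih => exact le_of_lt (lt_of_le_of_lt ih hstep.2)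
  have hacD : IsAcyclicRel dir := by
    intro x y hxy hyx
    have h1 := hrtM' y x hyx
    have h2 := hxy.2
    omega
  refine ⟨⟨dir, fun x y h => h.1, ?_, ?_⟩, hacD, ?_⟩
  · intro x y hadj
    rcases lt_trichotomy (M' x) (M' y) with hh | hh | hh
    · exact Or.inl ⟨hadj, hh⟩
    · exact absurd (hM'inj x y hh) hadj.ne
    · exact Or.inr ⟨hadj.symm, hh⟩
  · rintro x y ⟨_, h1⟩ ⟨_, h2⟩
    omega
  · show Set.ncard {p : V × V | DependentArc dir p.1 p.2} ≤ 1
    have hsub : {p : V × V | DependentArc dir p.1 p.2} ⊆ {(u, v)} := by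
      rintro ⟨a, b⟩ ⟨hdir, hcyc⟩
      simp only [Set.mem_setOf_eq, Set.mem_singleton_iff, Prod.mk.injEq]
      by_contra hnab
      rw [not_and] at hnab
      have hext := cycle_extract hacD hcyc
      set dir₂ : V → V → Prop := fun x y =>
        (dir x y ∧ ¬(x = a ∧ y = b)) ∧ ¬(x = u ∧ y = v) with hdir₂
      have hd2dir : ∀ x y, dir₂ x y → dir x y := fun x y h => h.1.1
      have hd2R0 : ∀ x y, dir₂ x y →
          (R0 x y ∧ (S x ↔ S y)) ∨ (R0 y x ∧ ¬ S x ∧ S y) := by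
        intro x y h
        rcases hclass x y h.1.1 with huvxy | h' | h'
        · exact absurd huvxy h.2
        · exact Or.inl h'
        · exact Or.inr h'
      have hBpath : ∀ p q, Relation.ReflTransGen dir₂ p q → S p →
          Relation.ReflTransGen R0 p q := by
        intro p q hpq
        induction hpq using Relation.ReflTransGen.head_induction_on with
        | refl => exact fun _ => Relation.ReflTransGen.refl
        | head hstep hrest ih =>
          intro hSp
          rcases hd2R0 _ _ hstep with ⟨h0, hiff⟩ | ⟨_, hna, _⟩
          · exact (ih (hiff.mp hSp)).head h0
          · exact absurd hSp hna
      have hTpath : ∀ p q, Relation.ReflTransGen dir₂ p q → ¬ S q →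
          Relation.ReflTransGen R0 p q := by
        intro p q hpq
        induction hpq using Relation.ReflTransGen.head_induction_on with
        | refl => exact fun _ => Relation.ReflTransGen.refl
        | head hstep hrest ih =>
          intro hq
          rcases hd2R0 _ _ hstep with ⟨h0, hiff⟩ | ⟨_, _, hSc⟩
          · exact (ih hq).head h0
          · exact absurd (hrtS _ q (ReflTransGen.mono hd2dir _ _ hrest) hSc) hq
      have hcross : ∀ p q, Relation.ReflTransGen dir₂ p q → ¬ S p → S q →
          ∃ x y, dir₂ x y ∧ R0 y x ∧ ¬ S x ∧ S y ∧
            Relation.ReflTransGen R0 p x ∧ Relation.ReflTransGen R0 y q := by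
        intro p q hpq
        induction hpq using Relation.ReflTransGen.head_induction_on with
        | refl => exact fun h1 h2 => absurd h2 h1
        | head hstep hrest ih =>
          intro hnp hq
          rcases hd2R0 _ _ hstep with ⟨h0, hiff⟩ | ⟨h0, hna, hSc⟩
          · obtain ⟨x, y, h₁, h₂, h₃, h₄, h₅, h₆⟩ :=
              ih (fun hc => hnp (hiff.mpr hc)) hq
            exact ⟨x, y, h₁, h₂, h₃, h₄, h₅.head h0, h₆⟩
          · exact ⟨_, _, hstep, h0, hnp, hSc, Relation.ReflTransGen.refl,
              hBpath _ q hrest hSc⟩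
      rcases rt_remove u v hext with hp | ⟨h1, h2⟩
      · -- path a ⇝ b avoiding both (a,b) and (u,v)
        rcases hclass a b hdir with huv' | ⟨hab0, hiff⟩ | ⟨hba0, hSa, hSb⟩
        · exact hnab huv'.1 huv'.2
        · have habne : a ≠ b := (D₀.dir_adj a b hab0).ne
          rcases hp.cases_head with heq | ⟨z, hz, hzb⟩
          · exact habne heq
          · have hza : z ≠ a := (hd2dir a z hz).1.ne.symm
            have hzb' : z ≠ b := fun h => hz.1.2 ⟨rfl, h⟩
            have hstep0 : R0 a z := by
              rcases hd2R0 a z hz with ⟨h0, _⟩ | ⟨h0, hna, hSz⟩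
              · exact h0
              · exfalso
                by_cases hSb' : S b
                · exact hna (hiff.mpr hSb')
                · exact hSb' (hrtS z b (ReflTransGen.mono hd2dir _ _ hzb) hSz)
            have hrest0 : Relation.ReflTransGen R0 z b := by
              by_cases hSb' : S b
              · refine hBpath z b hzb ?_
                rcases hd2R0 a z hz with ⟨_, hiff'⟩ | ⟨_, _, hSz⟩
                · exact hiff'.mp (hiff.mpr hSb')
                · exact hSz
              · exact hTpath z b hzb hSb'
            exact dep_of_mid hac hnd hab0 (Relation.ReflTransGen.single hstep0)
              hrest0 hza hzb'
        · obtain ⟨x, y, hstep₂, hyx, hSx, hSy, hax, hyb⟩ := hcross a b hp hSa hSb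
          by_cases hby : b = y
          · have hay : a ≠ y := fun h => hSa (h ▸ hSy)
            have hax' : a ≠ x := fun h => hstep₂.1.2 ⟨h.symm, hby.symm⟩
            exact dep_of_mid hac hnd hyx
              (hby ▸ Relation.ReflTransGen.single hba0) hax hay hax'
          · have hbx : b ≠ x := fun h => hSx (h ▸ hSb)
            exact dep_of_mid hac hnd hyx hyb
              (Relation.ReflTransGen.head hba0 hax) hby hbx
      · -- paths a ⇝ u and v ⇝ b : force a = u, b = v
        have hMau := hrtM' a u (ReflTransGen.mono (fun x y h => h.1.1) _ _ h1)
        have hMvb := hrtM' v b (ReflTransGen.mono (fun x y h => h.1.1) _ _ h2)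
        have ha_u : a = u := by
          by_contra hau
          have hp1 : 1 ≤ M a := hMpos a hau
          have hc : n ≤ M a * n := Nat.le_mul_of_pos_left n (by omega)
          have e1 : M' u = g u := by simp [hM', hMu]
          have e2 : M' a = M a * n + g a := rfl
          have := hg_lt u
          omega
        have hb_v : b = v := by
          by_contra hbv
          have h1' : M b ≤ 2*n+2 := hMvmax b hbv
          have h3 : M b * n ≤ (2*n+2)*n := Nat.mul_le_mul_right n h1'
          have h4 : (2*n+3)*n = (2*n+2)*n + n := by ring
          have e1 : M' v = (2*n+3)*n + g v := by simp [hM', hMv]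
          have e2 : M' b = M b * n + g b := rfl
          have := hg_lt b
          omega
        exact hnab ha_u hb_v
    calc Set.ncard {p : V × V | DependentArc dir p.1 p.2}
        ≤ Set.ncard {((u, v) : V × V)} :=
          Set.ncard_le_ncard hsub (Set.finite_singleton _)
      _ = 1 := Set.ncard_singleton _


theorem coverDeletion_eq_two [Finite V] (G : SimpleGraph V)
    (h : dmin G = 2) : coverDeletion G = 2 := by
  classical
  have hdset : {n | ∃ D : Orient G, IsAcyclicRel D.dir ∧ numDependent D = n}.Nonempty := by
    rcases Set.eq_empty_or_nonempty
        {n | ∃ D : Orient G, IsAcyclicRel D.dir ∧ numDependent D = n} with he | hne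
    · exfalso
      rw [dmin, he, Nat.sInf_empty] at h
      exact two_ne_zero h.symm
    · exact hne
  obtain ⟨D, hacD, hnum⟩ : ∃ D : Orient G, IsAcyclicRel D.dir ∧ numDependent D = 2 := by
    have hm := Nat.sInf_mem hdset
    rw [show sInf {n | ∃ D : Orient G, IsAcyclicRel D.dir ∧ numDependent D = n}
      = dmin G from rfl, h] at hm
    exact hm
  have hupper : coverDeletion G ≤ 2 := by
    set F : Set (Sym2 V) :=
      (fun p : V × V => s(p.1, p.2)) '' {p : V × V | DependentArc D.dir p.1 p.2} with hF
    have hFsub : F ⊆ G.edgeSet := by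
      rintro e ⟨⟨a, b⟩, hdep, rfl⟩
      exact (G.mem_edgeSet).mpr (D.dir_adj a b hdep.1)
    have hFcard : F.ncard ≤ 2 := by
      calc F.ncard ≤ Set.ncard {p : V × V | DependentArc D.dir p.1 p.2} :=
            Set.ncard_image_le (Set.toFinite _)
        _ = 2 := hnum
    have hcov : IsCoverGraph (G.deleteEdges F) := by
      refine ⟨⟨fun x y => D.dir x y ∧ s(x, y) ∉ F, ?_, ?_, ?_⟩, ?_, ?_⟩
      · rintro x y ⟨h1, h2⟩
        exact SimpleGraph.deleteEdges_adj.mpr ⟨D.dir_adj x y h1, h2⟩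
      · intro x y hadj
        rw [SimpleGraph.deleteEdges_adj] at hadj
        rcases D.adj_dir x y hadj.1 with hd | hd
        · exact Or.inl ⟨hd, hadj.2⟩
        · refine Or.inr ⟨hd, ?_⟩
          rw [Sym2.eq_swap]
          exact hadj.2
      · rintro x y ⟨h1, _⟩ ⟨h2, _⟩
        exact D.asymm x y h1 h2
      · exact acyclic_mono (fun x y hh => hh.1) hacD
      · rintro p q ⟨hd, hcyc⟩
        apply hd.2
        refine ⟨(p, q), ⟨hd.1, ?_⟩, rfl⟩
        intro hacyc
        apply hcyc
        apply acyclic_mono _ hacyc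
        rintro x y (⟨⟨hxy, _⟩, hno⟩ | ⟨rfl, rfl⟩)
        · exact Or.inl ⟨hxy, hno⟩
        · exact Or.inr ⟨rfl, rfl⟩
    exact le_trans (Nat.sInf_le ⟨F, hFsub, hcov, rfl⟩) hFcard
  have hlower : 2 ≤ coverDeletion G := by
    have hemptycov : IsCoverGraph (G.deleteEdges G.edgeSet) := by
      refine ⟨⟨fun _ _ => False, ?_, ?_, ?_⟩, ?_, ?_⟩
      · exact fun x y hh => hh.elim
      · intro x y hadj
        rw [SimpleGraph.deleteEdges_adj] at hadj
        exact absurd ((G.mem_edgeSet).mpr hadj.1) hadj.2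
      · exact fun x y hh => hh.elim
      · exact fun x y hh => hh.elim
      · rintro p q ⟨hp, _⟩
        exact hp
    have hscne : {n | ∃ F : Set (Sym2 V), F ⊆ G.edgeSet ∧
        IsCoverGraph (G.deleteEdges F) ∧ F.ncard = n}.Nonempty :=
      ⟨G.edgeSet.ncard, G.edgeSet, subset_rfl, hemptycov, rfl⟩
    by_contra hlt
    push_neg at hlt
    obtain ⟨F, hFsub, hFcov, hFcard⟩ := Nat.sInf_mem hscne
    have hFc : F.ncard < 2 := by
      rw [hFcard]
      exact hlt
    have hF01 : F.ncard = 0 ∨ F.ncard = 1 := by omega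
    rcases hF01 with h0 | h1
    · have hFe : F = ∅ := (Set.ncard_eq_zero (Set.toFinite F)).mp h0
      rw [hFe, SimpleGraph.deleteEdges_empty] at hFcov
      obtain ⟨D0, hac0, hnd0⟩ := hFcov
      have hd0 : dmin G ≤ 0 := by
        refine Nat.sInf_le ⟨D0, hac0, ?_⟩
        rw [numDependent, Set.ncard_eq_zero (Set.toFinite _)]
        exact Set.eq_empty_iff_forall_notMem.mpr (fun p hp => hnd0 p.1 p.2 hp)
      rw [h] at hd0
      omega
    · obtain ⟨e, hFe⟩ := Set.ncard_eq_one.mp h1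
      subst hFe
      revert hFsub hFcov
      induction e using Sym2.ind with
      | _ u v =>
        intro hFsub hFcov
        have huv : G.Adj u v := G.mem_edgeSet.mp (hFsub rfl)
        obtain ⟨D₀, hac0, hnd0⟩ := hFcov
        have hH : ∀ x y, (G.deleteEdges {s(u,v)}).Adj x y ↔
            G.Adj x y ∧ ¬(x = u ∧ y = v) ∧ ¬(x = v ∧ y = u) := by
          intro x y
          rw [SimpleGraph.deleteEdges_adj, Set.mem_singleton_iff, Sym2.eq_iff]
          tauto
        have hH' : ∀ x y, (G.deleteEdges {s(u,v)}).Adj x y ↔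
            G.Adj x y ∧ ¬(x = v ∧ y = u) ∧ ¬(x = u ∧ y = v) := by
          intro x y
          rw [hH]
          tauto
        have key : ∃ D' : Orient G, IsAcyclicRel D'.dir ∧ numDependent D' ≤ 1 := by
          by_cases hc1 : Relation.ReflTransGen D₀.dir u v
          · exact easy_case G huv _ hH D₀ hac0 hnd0 hc1
          · by_cases hc2 : Relation.ReflTransGen D₀.dir v u
            · exact easy_case G huv.symm _ hH' D₀ hac0 hnd0 hc2
            · exact hard_case G huv _ hH D₀ hac0 hnd0 hc1 hc2
        obtain ⟨D', hacD', hle⟩ := key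
        have hd1 : dmin G ≤ numDependent D' := Nat.sInf_le ⟨D', hacD', rfl⟩
        rw [h] at hd1
        omega
  exact le_antisymm hupper hlower
end

section
/- For every graph G with k connected components, the maximum number of dependent arcs over all acyclic orientations of G equals ‖G‖ − |G| + k, where ‖G‖ is the number of edges and |G| the number of vertices. -/
variable {V : Type*}

/- ## Auxiliary lemmas -/

lemma myAcyclicMono {r s : V → V → Prop} (h : ∀ a b, r a b → s a b)
    (hs : IsAcyclicRel s) : IsAcyclicRel r := by
  intro u v huv hvu
  exact hs u v (h u v huv) (Relation.ReflTransGen.mono (fun a b hab => h a b hab) _ _ hvu)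

/-- Build a dependent arc from a bypass path. -/
lemma myDepOfPath {dir : V → V → Prop} {u v : V} (huv : dir u v)
    (h : Relation.ReflTransGen (fun a b => dir a b ∧ ¬(a = u ∧ b = v)) u v) :
    DependentArc dir u v := by
  refine ⟨huv, fun hacyc => ?_⟩
  exact hacyc v u (Or.inr ⟨rfl, rfl⟩) (Relation.ReflTransGen.mono (fun a b hab => Or.inl hab) _ _ h)

lemma myRevDecomp {dir : V → V → Prop} {u v : V} :
    ∀ {x y}, Relation.ReflTransGen (reverseArc dir u v) x y →
      Relation.ReflTransGen (fun a b => dir a b ∧ ¬(a = u ∧ b = v)) x y ∨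
      (Relation.ReflTransGen (fun a b => dir a b ∧ ¬(a = u ∧ b = v)) x v ∧
        Relation.ReflTransGen (fun a b => dir a b ∧ ¬(a = u ∧ b = v)) u y) := by
  intro x y h
  induction h with
  | refl => exact Or.inl Relation.ReflTransGen.refl
  | tail hxz hzy ih =>
    rename_i z y'
    rcases hzy with hz | ⟨rfl, rfl⟩
    · rcases ih with h1 | ⟨h1, h2⟩
      · exact Or.inl (h1.tail hz)
      · exact Or.inr ⟨h1, h2.tail hz⟩
    · rcases ih with h1 | ⟨h1, h2⟩
      · exact Or.inr ⟨h1, Relation.ReflTransGen.refl⟩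
      · exact Or.inr ⟨h1, Relation.ReflTransGen.refl⟩

/-- Extract a bypass path from a dependent arc. -/
lemma myDepPath {dir : V → V → Prop} (hacyc : IsAcyclicRel dir) {u v : V}
    (h : DependentArc dir u v) :
    Relation.ReflTransGen (fun a b => dir a b ∧ ¬(a = u ∧ b = v)) u v := by
  have hsub : IsAcyclicRel (fun a b => dir a b ∧ ¬(a = u ∧ b = v)) :=
    myAcyclicMono (fun a b hab => hab.1) hacyc
  obtain ⟨hdir, hnac⟩ := h
  rw [IsAcyclicRel] at hnac
  push_neg at hnac
  obtain ⟨a, b, hab, hba⟩ := hnac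
  rcases myRevDecomp hba with h1 | ⟨h1, h2⟩
  · rcases hab with hab | ⟨rfl, rfl⟩
    · exact absurd h1 (hsub a b hab)
    · exact h1
  · rcases hab with hab | ⟨rfl, rfl⟩
    · exact h2.trans (Relation.ReflTransGen.head (r := fun a b => dir a b ∧ ¬(a = u ∧ b = v)) hab h1)
    · exact h2

/- ## Topological numbering -/

noncomputable def myTopo (dir : V → V → Prop) (v : V) : ℕ :=
  {x | Relation.TransGen dir x v}.ncard

lemma myTopoLt [Finite V] {dir : V → V → Prop} (hacyc : IsAcyclicRel dir) {u v : V}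
    (h : Relation.TransGen dir u v) : myTopo dir u < myTopo dir v := by
  have hnotuu : ¬ Relation.TransGen dir u u := by
    intro huu
    obtain ⟨c, h1, h2⟩ := Relation.TransGen.head'_iff.mp huu
    exact hacyc u c h1 h2
  apply Set.ncard_lt_ncard _ (Set.toFinite _)
  constructor
  · intro x hx; exact hx.trans h
  · intro hsub
    exact hnotuu (hsub h)

lemma myTopoLe [Finite V] {dir : V → V → Prop} (hacyc : IsAcyclicRel dir) {u v : V}
    (h : Relation.ReflTransGen dir u v) : u = v ∨ myTopo dir u < myTopo dir v := by
  rcases (Relation.reflTransGen_iff_eq_or_transGen.mp h) with h1 | h1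
  · exact Or.inl h1.symm
  · exact Or.inr (myTopoLt hacyc h1)

/- ## Counting arcs vs edges -/

lemma myNcardPairs [Finite V] {r : V → V → Prop} (hasym : ∀ a b, r a b → ¬ r b a) :
    ((fun p : V × V => s(p.1, p.2)) '' {p : V × V | r p.1 p.2}).ncard
      = {p : V × V | r p.1 p.2}.ncard := by
  apply Set.ncard_image_of_injOn
  rintro ⟨a, b⟩ hab ⟨c, d⟩ hcd h
  simp only [Set.mem_setOf_eq] at hab hcd
  simp only [Sym2.eq_iff] at h
  rcases h with ⟨rfl, rfl⟩ | ⟨rfl, rfl⟩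
  · rfl
  · exact absurd hcd (hasym _ _ hab)

lemma myEdgeSetEqImage {G : SimpleGraph V} {r : V → V → Prop}
    (h1 : ∀ a b, r a b → G.Adj a b) (h2 : ∀ a b, G.Adj a b → r a b ∨ r b a) :
    G.edgeSet = (fun p : V × V => s(p.1, p.2)) '' {p : V × V | r p.1 p.2} := by
  ext e
  induction e using Sym2.ind with
  | _ a b =>
    simp only [SimpleGraph.mem_edgeSet, Set.mem_image, Set.mem_setOf_eq, Prod.exists]
    constructor
    · intro hadj
      rcases h2 a b hadj with h | h
      · exact ⟨a, b, h, rfl⟩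
      · exact ⟨b, a, h, Sym2.eq_swap⟩
    · rintro ⟨x, y, hxy, h⟩
      rw [Sym2.eq_iff] at h
      rcases h with ⟨rfl, rfl⟩ | ⟨rfl, rfl⟩
      · exact h1 _ _ hxy
      · exact (h1 _ _ hxy).symm

lemma myEdgeCount [Finite V] {G : SimpleGraph V} {r : V → V → Prop}
    (hasym : ∀ a b, r a b → ¬ r b a)
    (h1 : ∀ a b, r a b → G.Adj a b) (h2 : ∀ a b, G.Adj a b → r a b ∨ r b a) :
    G.edgeSet.ncard = {p : V × V | r p.1 p.2}.ncard := by
  rw [myEdgeSetEqImage h1 h2, myNcardPairs hasym]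

/- ## Connected component counting -/

lemma myCardCCEq {G H : SimpleGraph V} (hle : H ≤ G)
    (h2 : ∀ u v, G.Adj u v → H.Reachable u v) :
    Nat.card H.ConnectedComponent = Nat.card G.ConnectedComponent := by
  have hreach : ∀ u v, G.Reachable u v → H.Reachable u v := by
    intro u v h
    rw [SimpleGraph.reachable_iff_reflTransGen] at h
    induction h with
    | refl => rfl
    | tail _ hadj ih => exact ih.trans (h2 _ _ hadj)
  have hg : ∀ (u v : V), G.Reachable u v →
      H.connectedComponentMk u = H.connectedComponentMk v :=
    fun u v h => SimpleGraph.ConnectedComponent.sound (hreach u v h)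
  refine (Nat.card_congr (⟨Quot.lift H.connectedComponentMk hg,
    SimpleGraph.ConnectedComponent.map (SimpleGraph.Hom.ofLE hle),
    ?_, ?_⟩ : G.ConnectedComponent ≃ H.ConnectedComponent)).symm
  · apply SimpleGraph.ConnectedComponent.ind; intro v; rfl
  · apply SimpleGraph.ConnectedComponent.ind; intro v; rfl

lemma myReachDelete {G : SimpleGraph V} (a b : V) {u v : V} (h : G.Reachable u v) :
    (G.deleteEdges {s(a,b)}).Reachable u v ∨
    ((G.deleteEdges {s(a,b)}).Reachable u a ∧ (G.deleteEdges {s(a,b)}).Reachable b v) ∨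
    ((G.deleteEdges {s(a,b)}).Reachable u b ∧ (G.deleteEdges {s(a,b)}).Reachable a v) := by
  set G' := G.deleteEdges {s(a,b)} with hG'
  obtain ⟨w⟩ := h
  induction w with
  | nil => exact Or.inl (SimpleGraph.Reachable.refl _)
  | cons hadj p ih =>
    rename_i c d e
    by_cases he : s(c, d) = s(a, b)
    · rw [Sym2.eq_iff] at he
      rcases he with ⟨rfl, rfl⟩ | ⟨rfl, rfl⟩
      · -- c = a, d = b
        rcases ih with h1 | ⟨h1, h2⟩ | ⟨h1, h2⟩
        · exact Or.inr (Or.inl ⟨SimpleGraph.Reachable.refl _, h1⟩)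
        · exact Or.inr (Or.inl ⟨SimpleGraph.Reachable.refl _, h2⟩)
        · exact Or.inl h2
      · -- c = b, d = a
        rcases ih with h1 | ⟨h1, h2⟩ | ⟨h1, h2⟩
        · exact Or.inr (Or.inr ⟨SimpleGraph.Reachable.refl _, h1⟩)
        · exact Or.inl h2
        · exact Or.inr (Or.inr ⟨SimpleGraph.Reachable.refl _, h2⟩)
    · have r0 : G'.Adj c d := by
        rw [hG', SimpleGraph.deleteEdges_adj]
        exact ⟨hadj, by simpa using he⟩
      rcases ih with h1 | ⟨h1, h2⟩ | ⟨h1, h2⟩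
      · exact Or.inl (r0.reachable.trans h1)
      · exact Or.inr (Or.inl ⟨r0.reachable.trans h1, h2⟩)
      · exact Or.inr (Or.inr ⟨r0.reachable.trans h1, h2⟩)

lemma myCardCCDelete [Finite V] (G : SimpleGraph V) (a b : V) :
    Nat.card (G.deleteEdges {s(a,b)}).ConnectedComponent ≤
      Nat.card G.ConnectedComponent + 1 := by
  set G' := G.deleteEdges {s(a,b)} with hG'
  set F : G'.ConnectedComponent → G.ConnectedComponent :=
    SimpleGraph.ConnectedComponent.map
      (SimpleGraph.Hom.ofLE (SimpleGraph.deleteEdges_le _)) with hF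
  have key : ∀ x y, F x = F y → x = y ∨
      (x = G'.connectedComponentMk a ∧ y = G'.connectedComponentMk b) ∨
      (x = G'.connectedComponentMk b ∧ y = G'.connectedComponentMk a) := by
    apply SimpleGraph.ConnectedComponent.ind₂
    intro u v h
    have hr : G.Reachable u v := SimpleGraph.ConnectedComponent.exact h
    rcases myReachDelete a b hr with h1 | ⟨h1, h2⟩ | ⟨h1, h2⟩
    · exact Or.inl (SimpleGraph.ConnectedComponent.sound h1)
    · exact Or.inr (Or.inl ⟨SimpleGraph.ConnectedComponent.sound h1,
        (SimpleGraph.ConnectedComponent.sound h2.symm)⟩)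
    · exact Or.inr (Or.inr ⟨SimpleGraph.ConnectedComponent.sound h1,
        (SimpleGraph.ConnectedComponent.sound h2.symm)⟩)
  set cb := G'.connectedComponentMk b with hcb
  have hinj : Set.InjOn F {cb}ᶜ := by
    intro x hx y hy hxy
    rcases key x y hxy with h | ⟨h1, h2⟩ | ⟨h1, h2⟩
    · exact h
    · exact absurd h2 hy
    · exact absurd h1 hx
  have h1 : ({cb}ᶜ : Set G'.ConnectedComponent).ncard + 1 = Nat.card G'.ConnectedComponent := by
    have huniv : (Set.univ : Set G'.ConnectedComponent) = insert cb {cb}ᶜ := by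
      ext x; by_cases h : x = cb <;> simp [h]
    rw [← Set.ncard_univ, huniv, Set.ncard_insert_of_notMem (by simp) (Set.toFinite _)]
  have h2 : ({cb}ᶜ : Set G'.ConnectedComponent).ncard ≤ Nat.card G.ConnectedComponent := by
    rw [← Set.ncard_image_of_injOn hinj, ← Set.ncard_univ]
    exact Set.ncard_le_ncard (Set.subset_univ _) (Set.toFinite _)
  omega

lemma myCompBound [Finite V] (G : SimpleGraph V) :
    Nat.card V ≤ G.edgeSet.ncard + Nat.card G.ConnectedComponent := by
  obtain ⟨m, hm⟩ : ∃ m, G.edgeSet.ncard = m := ⟨_, rfl⟩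
  induction m generalizing G with
  | zero =>
    have hempty : G.edgeSet = ∅ := by
      rw [← Set.ncard_eq_zero (Set.toFinite _)]; exact hm
    have hnoadj : ∀ u v, ¬ G.Adj u v := by
      intro u v hadj
      have : s(u,v) ∈ G.edgeSet := hadj
      rw [hempty] at this
      exact this
    have hinj : Function.Injective G.connectedComponentMk := by
      intro u v h
      have hr := SimpleGraph.ConnectedComponent.exact h
      obtain ⟨w⟩ := hr
      cases w with
      | nil => rfl
      | cons hadj _ => exact absurd hadj (hnoadj _ _)
    calc Nat.card V ≤ Nat.card G.ConnectedComponent := Nat.card_le_card_of_injective _ hinj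
      _ ≤ G.edgeSet.ncard + Nat.card G.ConnectedComponent := le_add_self
  | succ m ih =>
    have hne : G.edgeSet.Nonempty := Set.nonempty_of_ncard_ne_zero (by omega)
    obtain ⟨e, he⟩ := hne
    revert he
    induction e using Sym2.ind with
    | _ a b =>
      intro he
      have hdel : (G.deleteEdges {s(a,b)}).edgeSet.ncard = m := by
        rw [SimpleGraph.edgeSet_deleteEdges]
        rw [Set.ncard_diff_singleton_of_mem he, hm]
        omega
      have := ih (G.deleteEdges {s(a,b)}) hdel
      have := myCardCCDelete G a b
      omega

/- ## Upper bound -/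

lemma myReachIndep [Finite V] {G : SimpleGraph V} (D : Orient G) (hD : IsAcyclicRel D.dir)
    {H : SimpleGraph V}
    (hH : ∀ a b, D.dir a b → ¬ DependentArc D.dir a b → H.Adj a b) :
    ∀ u v, D.dir u v → H.Reachable u v := by
  set f := myTopo D.dir with hf
  suffices key : ∀ (N : ℕ) (u v : V), D.dir u v → f v - f u ≤ N → H.Reachable u v by
    intro u v huv
    exact key (f v - f u) u v huv le_rfl
  intro N
  induction N with
  | zero =>
    intro u v huv hN
    have hlt : f u < f v := myTopoLt hD (Relation.TransGen.single huv)
    omega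
  | succ N ihN =>
    intro u v huv hN
    by_cases hdep : DependentArc D.dir u v
    · have hpath := myDepPath hD hdep
      have claim : ∀ x (_ : Relation.ReflTransGen
          (fun a b => D.dir a b ∧ ¬(a = u ∧ b = v)) x v),
          (x = u ∨ f u < f x) → H.Reachable x v := by
        intro x hx
        induction hx using Relation.ReflTransGen.head_induction_on with
        | refl => intro _; exact SimpleGraph.Reachable.refl _
        | head hxc hcv ih =>
          rename_i x' c
          intro hx'
          have hfux : f u ≤ f x' := by
            rcases hx' with rfl | h
            · exact le_rfl
            · exact h.le
          have hxclt : f x' < f c := myTopoLt hD (Relation.TransGen.single hxc.1)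
          have hfcv : c = v ∨ f c < f v := by
            apply myTopoLe hD
            exact Relation.ReflTransGen.mono (fun a b hab => hab.1) _ _ hcv
          have hbound : f c - f x' ≤ N := by
            rcases hx' with rfl | hlt
            · rcases hfcv with rfl | hlt'
              · exact absurd ⟨rfl, rfl⟩ hxc.2
              · omega
            · rcases hfcv with rfl | hlt'
              · omega
              · omega
          have h1 : H.Reachable x' c := ihN x' c hxc.1 hbound
          have h2 : H.Reachable c v := ih (Or.inr (lt_of_le_of_lt hfux hxclt))
          exact h1.trans h2
      exact claim u hpath (Or.inl rfl)
    · exact (hH u v huv hdep).reachable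

lemma myUpper [Finite V] (G : SimpleGraph V) (D : Orient G) (hD : IsAcyclicRel D.dir) :
    numDependent D + Nat.card V ≤ G.edgeSet.ncard + Nat.card G.ConnectedComponent := by
  classical
  set Ind : V → V → Prop := fun a b => D.dir a b ∧ ¬ DependentArc D.dir a b with hInd
  set H : SimpleGraph V :=
    { Adj := fun a b => Ind a b ∨ Ind b a
      symm := by constructor; intro a b h; tauto
      loopless := by
        constructor
        intro a h
        rcases h with h | h <;> exact (G.loopless.irrefl a) (D.dir_adj a a h.1) } with hH
  have hHadj : ∀ a b, H.Adj a b ↔ (Ind a b ∨ Ind b a) := fun a b => Iff.rfl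
  have hle : H ≤ G := by
    intro a b hab
    rcases hab with h | h
    · exact D.dir_adj a b h.1
    · exact (D.dir_adj b a h.1).symm
  have hreach := myReachIndep D hD (H := H) (fun a b h1 h2 => Or.inl ⟨h1, h2⟩)
  have h2 : ∀ u v, G.Adj u v → H.Reachable u v := by
    intro u v hadj
    rcases D.adj_dir u v hadj with h | h
    · exact hreach u v h
    · exact (hreach v u h).symm
  have hcc : Nat.card H.ConnectedComponent = Nat.card G.ConnectedComponent :=
    myCardCCEq hle h2
  have hIndAsym : ∀ a b, Ind a b → ¬ Ind b a := by
    intro a b h1 h2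
    exact D.asymm a b h1.1 h2.1
  have heH : H.edgeSet.ncard = {p : V × V | Ind p.1 p.2}.ncard :=
    myEdgeCount hIndAsym (fun a b h => Or.inl h) (fun a b h => h)
  have heG : G.edgeSet.ncard = {p : V × V | D.dir p.1 p.2}.ncard :=
    myEdgeCount D.asymm D.dir_adj D.adj_dir
  have hL1 := myCompBound H
  -- split arcs into dependent and independent
  have hsplit : {p : V × V | Ind p.1 p.2}.ncard + numDependent D
      = {p : V × V | D.dir p.1 p.2}.ncard := by
    have hseteq : {p : V × V | Ind p.1 p.2}
        = {p : V × V | D.dir p.1 p.2} \ {p : V × V | DependentArc D.dir p.1 p.2} := by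
      ext p
      exact ⟨fun hp => ⟨hp.1, hp.2⟩, fun hp => ⟨hp.1, hp.2⟩⟩
    rw [numDependent, hseteq, Set.ncard_diff_add_ncard_of_subset
      (fun p hp => hp.1) (Set.toFinite _)]
  omega

/- ## DFS ordering -/

section DFS

variable [DecidableEq V] (G : SimpleGraph V)

/-- Arcs between visited vertices, oriented by visiting order. -/
def MyIncRel (L : List V) (a b : V) : Prop :=
  G.Adj a b ∧ a ∈ L ∧ b ∈ L ∧ L.idxOf a < L.idxOf b

/-- Visited vertices that still have unvisited neighbors form a directed chain. -/
def MyChain (L : List V) : Prop :=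
  ∀ u w, u ∈ L → w ∈ L → (∃ x, x ∉ L ∧ G.Adj u x) → (∃ y, y ∉ L ∧ G.Adj w y) →
    L.idxOf u ≤ L.idxOf w → Relation.ReflTransGen (MyIncRel G L) u w

/-- Any two earlier neighbors of a vertex are joined by an increasing path. -/
def MyAcc (L : List V) : Prop :=
  ∀ u w v, G.Adj u v → G.Adj w v → u ∈ L → w ∈ L → v ∈ L →
    L.idxOf u < L.idxOf w → L.idxOf w < L.idxOf v →
      Relation.ReflTransGen (MyIncRel G L) u w

variable {G}

lemma myIncRelMono {L : List V} {v : V} {a b : V} (h : MyIncRel G L a b) :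
    MyIncRel G (L ++ [v]) a b := by
  obtain ⟨hadj, ha, hb, hidx⟩ := h
  refine ⟨hadj, List.mem_append_left _ ha, List.mem_append_left _ hb, ?_⟩
  rwa [List.idxOf_append_of_mem ha, List.idxOf_append_of_mem hb]

lemma myIncPathMono {L : List V} {v : V} {a b : V}
    (h : Relation.ReflTransGen (MyIncRel G L) a b) :
    Relation.ReflTransGen (MyIncRel G (L ++ [v])) a b :=
  Relation.ReflTransGen.mono (fun _ _ hab => myIncRelMono hab) _ _ h

lemma myIncPathLe {L : List V} {a b : V}
    (h : Relation.ReflTransGen (MyIncRel G L) a b) : L.idxOf a ≤ L.idxOf b := by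
  induction h with
  | refl => exact le_rfl
  | tail _ hbc ih => exact ih.trans hbc.2.2.2.le

lemma myDfsAux [Fintype V] :
    ∀ (k : ℕ) (L : List V), L.Nodup → MyChain G L → MyAcc G L →
      (Finset.univ.filter (fun x => x ∉ L)).card ≤ k →
      ∃ L' : List V, L'.Nodup ∧ (∀ v, v ∈ L') ∧ MyAcc G L' := by
  classical
  intro k
  induction k with
  | zero =>
    intro L hnd _ hacc hcard
    refine ⟨L, hnd, ?_, hacc⟩
    intro v
    by_contra hv
    have : v ∈ Finset.univ.filter (fun x => x ∉ L) := by simp [hv]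
    have := Finset.card_pos.mpr ⟨v, this⟩
    omega
  | succ k ih =>
    intro L hnd hchain hacc hcard
    by_cases hall : ∀ v, v ∈ L
    · exact ⟨L, hnd, hall, hacc⟩
    push_neg at hall
    -- facts about appending a new vertex
    have hidxapp : ∀ (v₀ : V), v₀ ∉ L → ∀ a ∈ L,
        (L ++ [v₀]).idxOf a = L.idxOf a ∧ (L ++ [v₀]).idxOf a < L.length := by
      intro v₀ hv₀ a ha
      rw [List.idxOf_append_of_mem ha]
      exact ⟨rfl, List.idxOf_lt_length_iff.mpr ha⟩
    have hidxv₀ : ∀ (v₀ : V), v₀ ∉ L → (L ++ [v₀]).idxOf v₀ = L.length := by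
      intro v₀ hv₀
      rw [List.idxOf_append_of_notMem hv₀]
      simp
    have hmem' : ∀ (v₀ a : V), a ∈ L ++ [v₀] ↔ a ∈ L ∨ a = v₀ := by
      intro v₀ a; simp [List.mem_append]
    have hnd' : ∀ (v₀ : V), v₀ ∉ L → (L ++ [v₀]).Nodup := by
      intro v₀ hv₀
      rw [List.nodup_append]
      refine ⟨hnd, List.nodup_singleton _, ?_⟩
      intro a ha b hav hab
      rw [List.mem_singleton] at hav
      subst hav
      exact hv₀ (hab ▸ ha)
    have hmemOfLt : ∀ (v₀ : V), v₀ ∉ L → ∀ a, a ∈ L ++ [v₀] →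
        (L ++ [v₀]).idxOf a < L.length → a ∈ L := by
      intro v₀ hv₀ a ha hlt
      rcases (hmem' v₀ a).mp ha with h | rfl
      · exact h
      · rw [hidxv₀ a hv₀] at hlt; omega
    have hcard' : ∀ (v₀ : V), v₀ ∉ L →
        (Finset.univ.filter (fun x => x ∉ L ++ [v₀])).card ≤ k := by
      intro v₀ hv₀
      have hsub : Finset.univ.filter (fun x => x ∉ L ++ [v₀])
          ⊆ (Finset.univ.filter (fun x => x ∉ L)).erase v₀ := by
        intro x hx
        simp only [Finset.mem_filter, hmem' v₀, Finset.mem_erase, Finset.mem_univ,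
          true_and] at hx ⊢
        push_neg at hx
        exact ⟨hx.2, hx.1⟩
      have h1 := Finset.card_le_card hsub
      have h2 : v₀ ∈ Finset.univ.filter (fun x => x ∉ L) := by simp [hv₀]
      have h3 := Finset.card_erase_of_mem h2
      have h4 := Finset.card_pos.mpr ⟨v₀, h2⟩
      omega
    by_cases hA : ∃ x, x ∈ L ∧ ∃ y, y ∉ L ∧ G.Adj x y
    · -- DFS step: extend from the deepest active vertex
      set Af : Finset V := Finset.univ.filter (fun x => x ∈ L ∧ ∃ y, y ∉ L ∧ G.Adj x y)
        with hAf
      have hAfne : Af.Nonempty := by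
        obtain ⟨x, hx1, hx2⟩ := hA
        exact ⟨x, by simp [hAf, hx1, hx2]⟩
      obtain ⟨x₀, hx₀mem, hx₀max⟩ := Finset.exists_max_image Af (fun x => L.idxOf x) hAfne
      simp only [hAf, Finset.mem_filter, Finset.mem_univ, true_and] at hx₀mem
      obtain ⟨hx₀L, v₀, hv₀, hadj₀⟩ := hx₀mem
      have hmax : ∀ x, x ∈ L → (∃ y, y ∉ L ∧ G.Adj x y) → L.idxOf x ≤ L.idxOf x₀ := by
        intro x h1 h2
        exact hx₀max x (by simp [hAf, h1, h2])
      refine ih (L ++ [v₀]) (hnd' v₀ hv₀) ?_ ?_ (hcard' v₀ hv₀)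
      · -- chain
        intro u w hu hw hux hwy hle
        have hux' : ∃ x, x ∉ L ∧ G.Adj u x := by
          obtain ⟨x, hx1, hx2⟩ := hux
          exact ⟨x, fun hxL => hx1 (List.mem_append_left _ hxL), hx2⟩
        have hwy' : ∃ y, y ∉ L ∧ G.Adj w y := by
          obtain ⟨y, hy1, hy2⟩ := hwy
          exact ⟨y, fun hyL => hy1 (List.mem_append_left _ hyL), hy2⟩
        rcases (hmem' v₀ u).mp hu with huL | rfl
        · rcases (hmem' v₀ w).mp hw with hwL | rfl
          · -- both old
            rw [(hidxapp v₀ hv₀ u huL).1, (hidxapp v₀ hv₀ w hwL).1] at hle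
            exact myIncPathMono (hchain u w huL hwL hux' hwy' hle)
          · -- w = v₀ : go from u up to x₀ then step to w
            have hux₀ : L.idxOf u ≤ L.idxOf x₀ := hmax u huL hux'
            have hpath := hchain u x₀ huL hx₀L hux' ⟨w, hv₀, hadj₀⟩ hux₀
            refine (myIncPathMono hpath).tail ?_
            refine ⟨hadj₀, List.mem_append_left _ hx₀L, by simp, ?_⟩
            rw [(hidxapp w hv₀ x₀ hx₀L).1, hidxv₀ w hv₀]
            exact List.idxOf_lt_length_iff.mpr hx₀L
        · -- u = v₀ forces w = v₀
          rcases (hmem' u w).mp hw with hwL | rfl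
          · exfalso
            rw [hidxv₀ u hv₀] at hle
            have h2 := (hidxapp u hv₀ w hwL).2
            omega
          · exact Relation.ReflTransGen.refl
      · -- acc
        intro u w v hadjuv hadjwv hu hw hv hlt1 hlt2
        rcases (hmem' v₀ v).mp hv with hvL | rfl
        · -- v old: all three old
          have hvlen : (L ++ [v₀]).idxOf v < L.length := (hidxapp v₀ hv₀ v hvL).2
          have hwL : w ∈ L := hmemOfLt v₀ hv₀ w hw (by omega)
          have huL : u ∈ L := hmemOfLt v₀ hv₀ u hu (by omega)
          rw [(hidxapp v₀ hv₀ u huL).1, (hidxapp v₀ hv₀ w hwL).1] at hlt1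
          rw [(hidxapp v₀ hv₀ w hwL).1, (hidxapp v₀ hv₀ v hvL).1] at hlt2
          exact myIncPathMono (hacc u w v hadjuv hadjwv huL hwL hvL hlt1 hlt2)
        · -- v = v₀ : u, w earlier neighbors of the new vertex
          have hvidx : (L ++ [v]).idxOf v = L.length := hidxv₀ v hv₀
          have hwL : w ∈ L := hmemOfLt v hv₀ w hw (by omega)
          have huL : u ∈ L := hmemOfLt v hv₀ u hu (by omega)
          rw [(hidxapp v hv₀ u huL).1, (hidxapp v hv₀ w hwL).1] at hlt1
          have hchainuw := hchain u w huL hwL ⟨v, hv₀, hadjuv⟩ ⟨v, hv₀, hadjwv⟩ hlt1.le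
          exact myIncPathMono hchainuw
    · -- no active vertex: start a new component
      push_neg at hA
      obtain ⟨v₀, hv₀⟩ := hall
      refine ih (L ++ [v₀]) (hnd' v₀ hv₀) ?_ ?_ (hcard' v₀ hv₀)
      · intro u w hu hw hux hwy hle
        have huv₀ : u = v₀ := by
          rcases (hmem' v₀ u).mp hu with huL | rfl
          · exfalso
            obtain ⟨x, hx1, hx2⟩ := hux
            have hxL : x ∉ L := fun h => hx1 (List.mem_append_left _ h)
            exact hA u huL x hxL hx2
          · rfl
        have hwv₀ : w = v₀ := by
          rcases (hmem' v₀ w).mp hw with hwL | rfl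
          · exfalso
            obtain ⟨y, hy1, hy2⟩ := hwy
            have hyL : y ∉ L := fun h => hy1 (List.mem_append_left _ h)
            exact hA w hwL y hyL hy2
          · rfl
        rw [huv₀, hwv₀]
      · intro u w v hadjuv hadjwv hu hw hv hlt1 hlt2
        rcases (hmem' v₀ v).mp hv with hvL | rfl
        · have hvlen : (L ++ [v₀]).idxOf v < L.length := (hidxapp v₀ hv₀ v hvL).2
          have hwL : w ∈ L := hmemOfLt v₀ hv₀ w hw (by omega)
          have huL : u ∈ L := hmemOfLt v₀ hv₀ u hu (by omega)
          rw [(hidxapp v₀ hv₀ u huL).1, (hidxapp v₀ hv₀ w hwL).1] at hlt1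
          rw [(hidxapp v₀ hv₀ w hwL).1, (hidxapp v₀ hv₀ v hvL).1] at hlt2
          exact myIncPathMono (hacc u w v hadjuv hadjwv huL hwL hvL hlt1 hlt2)
        · exfalso
          have hvidx : (L ++ [v]).idxOf v = L.length := hidxv₀ v hv₀
          have huL : u ∈ L := hmemOfLt v hv₀ u hu (by omega)
          exact hA u huL v hv₀ hadjuv

lemma myDfsExists [Fintype V] (G : SimpleGraph V) :
    ∃ L : List V, L.Nodup ∧ (∀ v, v ∈ L) ∧ MyAcc G L := by
  apply myDfsAux (Finset.univ.filter (fun x => x ∉ ([] : List V))).card []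
    List.nodup_nil
  · intro u w hu; exact absurd hu List.not_mem_nil
  · intro u w v _ _ hu; exact absurd hu List.not_mem_nil
  · exact le_rfl

end DFS

/- ## Lower bound -/

lemma myLower [Finite V] (G : SimpleGraph V) :
    ∃ D : Orient G, IsAcyclicRel D.dir ∧
      G.edgeSet.ncard + Nat.card G.ConnectedComponent ≤ numDependent D + Nat.card V := by
  classical
  cases nonempty_fintype V
  obtain ⟨L, hnd, hall, hacc⟩ := myDfsExists G
  have hidxinj : ∀ u v : V, L.idxOf u = L.idxOf v → u = v := fun u v h =>
    (List.idxOf_inj (hall u)).mp h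
  set dir : V → V → Prop := fun a b => G.Adj a b ∧ L.idxOf a < L.idxOf b with hdir
  have hdiradj : ∀ u v, dir u v → G.Adj u v := fun u v h => h.1
  have hadjdir : ∀ u v, G.Adj u v → dir u v ∨ dir v u := by
    intro u v hadj
    rcases lt_trichotomy (L.idxOf u) (L.idxOf v) with h | h | h
    · exact Or.inl ⟨hadj, h⟩
    · exact absurd (hidxinj u v h) hadj.ne
    · exact Or.inr ⟨hadj.symm, h⟩
  have hasym : ∀ u v, dir u v → ¬ dir v u := fun u v h1 h2 =>
    absurd h2.2 (not_lt.mpr h1.2.le)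
  have hmono : ∀ a b, Relation.ReflTransGen dir a b → L.idxOf a ≤ L.idxOf b := by
    intro a b h
    induction h with
    | refl => exact le_rfl
    | tail _ hbc ih => exact ih.trans hbc.2.le
  have hacyc : IsAcyclicRel dir := fun u v huv hvu =>
    absurd (hmono v u hvu) (not_le.mpr huv.2)
  -- any non-maximal in-arc is dependent
  have hdep : ∀ u w v, dir u v → dir w v → L.idxOf u < L.idxOf w →
      DependentArc dir u v := by
    intro u w v huv hwv hlt
    have hpath := hacc u w v huv.1 hwv.1 (hall u) (hall w) (hall v) hlt hwv.2
    apply myDepOfPath huv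
    have claim : ∀ x, Relation.ReflTransGen (MyIncRel G L) x w →
        Relation.ReflTransGen (fun a b => dir a b ∧ ¬(a = u ∧ b = v)) x v := by
      intro x hx
      induction hx using Relation.ReflTransGen.head_induction_on with
      | refl =>
        refine Relation.ReflTransGen.single ⟨hwv, ?_⟩
        rintro ⟨rfl, -⟩
        exact lt_irrefl _ hlt
      | head hxc hcw ih =>
        refine Relation.ReflTransGen.head ⟨⟨hxc.1, hxc.2.2.2⟩, ?_⟩ ih
        rintro ⟨rfl, rfl⟩
        exact absurd (myIncPathLe hcw) (not_le.mpr hwv.2)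
    exact claim u hpath
  set Dep := {p : V × V | DependentArc dir p.1 p.2} with hDep
  set Indep := {p : V × V | dir p.1 p.2 ∧ ¬ DependentArc dir p.1 p.2} with hIndep
  have hinj : Set.InjOn Prod.snd Indep := by
    rintro ⟨u, v⟩ hp ⟨w, v'⟩ hq h
    have hv : v = v' := h
    subst hv
    rcases lt_trichotomy (L.idxOf u) (L.idxOf w) with hlt | heq | hlt
    · exact absurd (hdep u w v hp.1 hq.1 hlt) hp.2
    · rw [hidxinj u w heq]
    · exact absurd (hdep w u v hq.1 hp.1 hlt) hq.2
  have hmin : ∀ c : G.ConnectedComponent, ∃ v, G.connectedComponentMk v = c ∧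
      ∀ w, G.connectedComponentMk w = c → L.idxOf v ≤ L.idxOf w := by
    intro c
    induction c using SimpleGraph.ConnectedComponent.ind with
    | _ u =>
      obtain ⟨v, hv, hvmin⟩ := Finset.exists_min_image
        (Finset.univ.filter fun x => G.connectedComponentMk x = G.connectedComponentMk u)
        (fun x => L.idxOf x) ⟨u, Finset.mem_filter.mpr ⟨Finset.mem_univ u, rfl⟩⟩
      simp only [Finset.mem_filter, Finset.mem_univ, true_and] at hv
      exact ⟨v, hv, fun w hw => hvmin w (Finset.mem_filter.mpr ⟨Finset.mem_univ w, hw⟩)⟩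
  choose g hg1 hg2 using hmin
  have hginj : Function.Injective g := by
    intro c d h
    rw [← hg1 c, ← hg1 d, h]
  have hsource : ∀ (u : V) (c), ¬ dir u (g c) := by
    intro u c h
    have hcomp : G.connectedComponentMk u = c := by
      rw [← hg1 c]
      exact SimpleGraph.ConnectedComponent.connectedComponentMk_eq_of_adj h.1
    exact absurd h.2 (not_lt.mpr (hg2 c u hcomp))
  have hdisj : Disjoint (Prod.snd '' Indep) (Set.range g) := by
    rw [Set.disjoint_left]
    rintro t ⟨p, hp, hpt⟩ ⟨c, hct⟩
    apply hsource p.1 c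
    rw [hct, ← hpt]
    exact hp.1
  have h1 : (Prod.snd '' Indep).ncard = Indep.ncard := Set.ncard_image_of_injOn hinj
  have h2 : (Set.range g).ncard = Nat.card G.ConnectedComponent := by
    rw [← Set.image_univ, Set.ncard_image_of_injective _ hginj, Set.ncard_univ]
  have h3 := Set.ncard_union_eq hdisj (Set.toFinite _) (Set.toFinite _)
  have h4 : ((Prod.snd '' Indep) ∪ Set.range g).ncard ≤ Nat.card V := by
    rw [← Set.ncard_univ]
    exact Set.ncard_le_ncard (Set.subset_univ _) (Set.toFinite _)
  have heG : G.edgeSet.ncard = {p : V × V | dir p.1 p.2}.ncard :=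
    myEdgeCount hasym hdiradj hadjdir
  have hsplit : Indep.ncard + Dep.ncard = {p : V × V | dir p.1 p.2}.ncard := by
    have hseteq : Indep
        = {p : V × V | dir p.1 p.2} \ Dep := by
      ext p
      exact ⟨fun hp => ⟨hp.1, hp.2⟩, fun hp => ⟨hp.1, hp.2⟩⟩
    rw [hseteq, hDep, Set.ncard_diff_add_ncard_of_subset
      (fun p hp => hp.1) (Set.toFinite _)]
  refine ⟨⟨dir, hdiradj, hadjdir, hasym⟩, hacyc, ?_⟩
  have hnum : numDependent ⟨dir, hdiradj, hadjdir, hasym⟩ = Dep.ncard := rfl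
  rw [hnum]
  omega


theorem dmax_eq [Finite V] (G : SimpleGraph V) :
    dmax G + Nat.card V = G.edgeSet.ncard + Nat.card G.ConnectedComponent := by
  classical
  obtain ⟨D₀, hac₀, hge⟩ := myLower G
  have hdmax : dmax G = sSup {n | ∃ D : Orient G, IsAcyclicRel D.dir ∧ numDependent D = n} :=
    rfl
  have hS0 : numDependent D₀ ∈ {n | ∃ D : Orient G, IsAcyclicRel D.dir ∧ numDependent D = n} :=
    ⟨D₀, hac₀, rfl⟩
  have hbdd : BddAbove {n | ∃ D : Orient G, IsAcyclicRel D.dir ∧ numDependent D = n} := by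
    refine ⟨G.edgeSet.ncard, ?_⟩
    rintro n ⟨D, hD, rfl⟩
    have heG : G.edgeSet.ncard = {p : V × V | D.dir p.1 p.2}.ncard :=
      myEdgeCount D.asymm D.dir_adj D.adj_dir
    rw [numDependent, heG]
    exact Set.ncard_le_ncard (fun p hp => hp.1) (Set.toFinite _)
  have hmem := Nat.sSup_mem ⟨_, hS0⟩ hbdd
  rw [← hdmax] at hmem
  obtain ⟨D₁, hac₁, hval⟩ := hmem
  have hup := myUpper G D₁ hac₁
  have hle : numDependent D₀ ≤ dmax G := by
    rw [hdmax]
    exact le_csSup hbdd hS0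
  omega
end

section
/- If G is a graph with chromatic number strictly less than its girth, then G admits an acyclic orientation with no dependent arcs (i.e., d_min(G) = 0). -/
variable {V : Type*}

section Aux

variable {G : SimpleGraph V}

/-- Walks extracted from a color-increasing relation. -/
lemma walk_of_rtg (c : V → ℕ) (dir' : V → V → Prop)
    (hadj : ∀ a b, dir' a b → G.Adj a b) (hlt : ∀ a b, dir' a b → c a < c b) :
    ∀ x y : V, Relation.ReflTransGen dir' x y →
      ∃ w : G.Walk x y, (∀ e ∈ w.edges, ∃ a b, dir' a b ∧ e = s(a, b)) ∧
        w.support.Nodup ∧ (∀ z ∈ w.support, c x ≤ c z) ∧ w.length + c x ≤ c y := by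
  intro x y hxy
  induction hxy using Relation.ReflTransGen.head_induction_on with
  | refl =>
    refine ⟨SimpleGraph.Walk.nil, by simp, by simp, by simp, by simp⟩
  | head hab _hbc ih =>
    rename_i a b
    obtain ⟨w, hedges, hnodup, hsupp, hlen⟩ := ih
    refine ⟨SimpleGraph.Walk.cons (hadj _ _ hab) w, ?_, ?_, ?_, ?_⟩
    · intro e he
      rw [SimpleGraph.Walk.edges_cons] at he
      rcases List.mem_cons.mp he with rfl | he
      · exact ⟨a, b, hab, rfl⟩
      · exact hedges e he
    · rw [SimpleGraph.Walk.support_cons, List.nodup_cons]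
      refine ⟨fun hmem => ?_, hnodup⟩
      exact absurd (hsupp a hmem) (not_le.mpr (hlt _ _ hab))
    · intro z hz
      rw [SimpleGraph.Walk.support_cons] at hz
      rcases List.mem_cons.mp hz with rfl | hz
      · exact le_refl _
      · exact le_trans (le_of_lt (hlt _ _ hab)) (hsupp z hz)
    · rw [SimpleGraph.Walk.length_cons]
      have := hlt _ _ hab
      omega

end Aux

theorem coverGraph_of_chromatic_lt_girth [Finite V] (G : SimpleGraph V)
    (h : G.chromaticNumber < G.girth) : IsCoverGraph G := by
  classical
  set n : ℕ := G.chromaticNumber.toNat with hn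
  have hcol : G.Colorable n := G.colorable_chromaticNumber_of_fintype
  have hne : G.chromaticNumber ≠ ⊤ := ne_top_of_lt h
  have hchrom : G.chromaticNumber = (n : ℕ∞) := (ENat.coe_toNat hne).symm
  have hng : n < G.girth := by
    rw [hchrom] at h
    exact_mod_cast h
  obtain ⟨C⟩ := hcol
  set c : V → ℕ := fun v => (C v : ℕ) with hc
  have hcne : ∀ {a b : V}, G.Adj a b → c a ≠ c b := by
    intro a b hab hcc
    exact C.valid hab (Fin.val_injective hcc)
  have hclt : ∀ a : V, c a < n := fun a => (C a).isLt
  -- the orientation: from lower color to higher color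
  set D : Orient G :=
    { dir := fun a b => G.Adj a b ∧ c a < c b
      dir_adj := fun a b hab => hab.1
      adj_dir := fun a b hab => by
        rcases lt_or_gt_of_ne (hcne hab) with h' | h'
        · exact Or.inl ⟨hab, h'⟩
        · exact Or.inr ⟨hab.symm, h'⟩
      asymm := fun a b hab hba => absurd hba.2 (not_lt.mpr (le_of_lt hab.2)) } with hD
  have hmono : ∀ {x y : V}, Relation.ReflTransGen D.dir x y → c x ≤ c y := by
    intro x y hxy
    induction hxy with
    | refl => exact le_refl _
    | tail _ hbc ih => exact le_trans ih (le_of_lt hbc.2)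
  have hacyc : IsAcyclicRel D.dir := by
    intro u v huv hvu
    exact absurd (hmono hvu) (not_le.mpr huv.2)
  refine ⟨D, hacyc, ?_⟩
  rintro u v ⟨huv, hdep⟩
  apply hdep
  intro a b hab hba
  -- dir' : arcs of D except (u, v)
  set dir' : V → V → Prop := fun a b => D.dir a b ∧ ¬(a = u ∧ b = v) with hdir'
  have hd'adj : ∀ a b, dir' a b → G.Adj a b := fun a b hab => hab.1.1
  have hd'lt : ∀ a b, dir' a b → c a < c b := fun a b hab => hab.1.2
  -- split any reverseArc path at occurrences of the reversed arc
  have split : ∀ x y : V, Relation.ReflTransGen (reverseArc D.dir u v) x y →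
      Relation.ReflTransGen dir' x y ∨
        (Relation.ReflTransGen dir' x v ∧ Relation.ReflTransGen dir' u y) := by
    intro x y hxy
    induction hxy with
    | refl => exact Or.inl Relation.ReflTransGen.refl
    | tail _ hby ih =>
      rcases hby with hby | ⟨rfl, rfl⟩
      · rcases ih with ih | ⟨ih1, ih2⟩
        · exact Or.inl (ih.tail hby)
        · exact Or.inr ⟨ih1, ih2.tail hby⟩
      · rcases ih with ih | ⟨ih1, _⟩
        · exact Or.inr ⟨ih, Relation.ReflTransGen.refl⟩
        · exact Or.inr ⟨ih1, Relation.ReflTransGen.refl⟩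
  -- extract a dir'-path from u to v
  have hd'mono : ∀ {x y : V}, Relation.ReflTransGen dir' x y →
      Relation.ReflTransGen D.dir x y := fun hxy => Relation.ReflTransGen.mono (fun _ _ (h : dir' _ _) => h.1) _ _ hxy
  have hpath : Relation.ReflTransGen dir' u v := by
    rcases hab with hab | ⟨rfl, rfl⟩
    · rcases split _ _ hba with hp | ⟨_, hp2⟩
      · exact absurd (hmono (hd'mono hp)) (not_le.mpr hab.1.2)
      · rcases split _ _ hba with hp | ⟨hp1, _⟩
        · exact absurd (hmono (hd'mono hp)) (not_le.mpr hab.1.2)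
        · exact (hp2.tail hab).trans hp1
    · rcases split _ _ hba with hp | ⟨hp1, hp2⟩
      · exact hp
      · exact hp1
  -- build a cycle from the path
  obtain ⟨w, hedges, hnodup, _, hlen⟩ := walk_of_rtg c dir' hd'adj hd'lt u v hpath
  have hcyc : (SimpleGraph.Walk.cons huv.1.symm w).IsCycle := by
    rw [SimpleGraph.Walk.cons_isCycle_iff]
    refine ⟨SimpleGraph.Walk.IsPath.mk' hnodup, fun hmem => ?_⟩
    obtain ⟨a', b', hd', he⟩ := hedges _ hmem
    rw [Sym2.eq_iff] at he
    rcases he with ⟨rfl, rfl⟩ | ⟨rfl, rfl⟩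
    · exact absurd huv.2 (not_lt.mpr (le_of_lt hd'.1.2))
    · exact hd'.2 ⟨rfl, rfl⟩
  -- girth bound
  have hgle : G.egirth ≤ ((SimpleGraph.Walk.cons huv.1.symm w).length : ℕ∞) := by
    refine le_trans ?_ (le_refl _)
    exact iInf_le_of_le v (iInf_le_of_le _ (iInf_le _ hcyc))
  have hlen' : (SimpleGraph.Walk.cons huv.1.symm w).length ≤ n := by
    rw [SimpleGraph.Walk.length_cons]
    have := hclt v
    omega
  have : G.girth ≤ n := by
    have := ENat.toNat_le_toNat hgle (ENat.coe_ne_top _)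
    simpa [SimpleGraph.girth] using le_trans this hlen'
  omega
end

section
/- A graph G satisfies d_min(G) = 0 if and only if G admits a 2-good acyclic orientation, i.e., an orientation in which every cycle has at least 2 forward arcs and at least 2 backward arcs with respect to either traversal direction. -/
variable {V : Type*}

/-- An orientation is 2-good if every cycle has at least two forward arcs
and at least two backward arcs. -/
def TwoGood {G : SimpleGraph V} (dir : V → V → Prop) : Prop :=
  ∀ (v : V) (C : G.Walk v v), C.IsCycle →
    (∃ d₁ ∈ C.darts, ∃ d₂ ∈ C.darts, d₁ ≠ d₂ ∧
      dir d₁.toProd.1 d₁.toProd.2 ∧ dir d₂.toProd.1 d₂.toProd.2) ∧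
    (∃ d₁ ∈ C.darts, ∃ d₂ ∈ C.darts, d₁ ≠ d₂ ∧
      dir d₁.toProd.2 d₁.toProd.1 ∧ dir d₂.toProd.2 d₂.toProd.1)


section Aux

open SimpleGraph Relation

variable {G : SimpleGraph V}

private lemma walk_chain {dir : V → V → Prop}
    (hdir : ∀ a b, dir a b → G.Adj a b) :
    ∀ {x y : V} (p : G.Walk x y), (∀ d ∈ p.darts, dir d.toProd.1 d.toProd.2) →
      Relation.ReflTransGen dir x y := by
  intro x y p
  induction p with
  | nil => intro _; exact Relation.ReflTransGen.refl
  | @cons a b c h p ih =>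
    intro hall
    exact Relation.ReflTransGen.head (hall ⟨(a, b), h⟩ (by simp))
      (ih fun d hd => hall d (by simp [hd]))

private lemma dep_of_chain (D : Orient G) {u v : V} (h : D.dir u v)
    (hc : Relation.ReflTransGen (fun a b => D.dir a b ∧ ¬(a = u ∧ b = v)) u v) :
    DependentArc D.dir u v := by
  refine ⟨h, fun hacy => ?_⟩
  exact hacy v u (Or.inr ⟨rfl, rfl⟩) (Relation.ReflTransGen.mono (fun a b hab => Or.inl hab) _ _ hc)

private lemma split_chain {r : V → V → Prop} {u v x y : V}
    (h : Relation.ReflTransGen (reverseArc r u v) x y) :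
    Relation.ReflTransGen (fun a b => r a b ∧ ¬(a = u ∧ b = v)) x y ∨
      (Relation.ReflTransGen (fun a b => r a b ∧ ¬(a = u ∧ b = v)) x v ∧
       Relation.ReflTransGen (fun a b => r a b ∧ ¬(a = u ∧ b = v)) u y) := by
  induction h using Relation.ReflTransGen.head_induction_on with
  | refl => exact Or.inl .refl
  | head hxz _ ih =>
    rcases hxz with hr | ⟨rfl, rfl⟩
    · rcases ih with h1 | ⟨h1, h2⟩
      · exact Or.inl (.head hr h1)
      · exact Or.inr ⟨.head hr h1, h2⟩
    · rcases ih with h1 | ⟨h1, h2⟩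
      · exact Or.inr ⟨.refl, h1⟩
      · exact Or.inr ⟨.refl, h2⟩

private lemma chain_of_dep (D : Orient G) (hac : IsAcyclicRel D.dir) {u v : V}
    (hd : DependentArc D.dir u v) :
    Relation.ReflTransGen (fun a b => D.dir a b ∧ ¬(a = u ∧ b = v)) u v := by
  obtain ⟨hdir, hcyc⟩ := hd
  rw [IsAcyclicRel] at hcyc
  push_neg at hcyc
  obtain ⟨a, b, hab, hba⟩ := hcyc
  rcases hab with hr | ⟨rfl, rfl⟩
  · rcases split_chain hba with h1 | ⟨h1, h2⟩
    · exact absurd (Relation.ReflTransGen.mono (fun a b h => h.1) _ _ h1) (hac a b hr.1)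
    · exact h2.trans (Relation.ReflTransGen.head hr h1)
  · rcases split_chain hba with h1 | ⟨h1, h2⟩
    · exact h1
    · exact h1

private lemma chain_to_walk {r : V → V → Prop} (hr : ∀ a b, r a b → G.Adj a b) {x y : V}
    (h : Relation.ReflTransGen r x y) :
    ∃ p : G.Walk x y, ∀ d ∈ p.darts, r d.toProd.1 d.toProd.2 := by
  induction h with
  | refl => exact ⟨.nil, by simp⟩
  | tail hab hbc ih =>
    obtain ⟨p, hp⟩ := ih
    refine ⟨p.concat (hr _ _ hbc), ?_⟩
    intro d hd
    rw [SimpleGraph.Walk.darts_concat, List.concat_eq_append, List.mem_append] at hd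
    rcases hd with hd | hd
    · exact hp d hd
    · simp only [List.mem_singleton] at hd
      subst hd
      exact hbc

private lemma dart_edge_swap {e d : G.Dart} (h1 : e.toProd.1 = d.toProd.2)
    (h2 : e.toProd.2 = d.toProd.1) : e.edge = d.edge := by
  obtain ⟨⟨e1, e2⟩, he⟩ := e; obtain ⟨⟨d1, d2⟩, hd⟩ := d
  simp only at h1 h2
  subst h1; subst h2
  simp [SimpleGraph.Dart.edge, Sym2.eq_swap]

private lemma no_dep_of_twoGood (D : Orient G) (hac : IsAcyclicRel D.dir)
    (h2 : TwoGood (G := G) D.dir) : ∀ u v, ¬ DependentArc D.dir u v := by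
  classical
  intro u v hd
  have hdir := hd.1
  have hadj := D.dir_adj u v hdir
  have hchain := chain_of_dep D hac hd
  obtain ⟨p, hp⟩ := chain_to_walk (fun a b h => D.dir_adj a b h.1) hchain
  have hqp : p.bypass.IsPath := p.bypass_isPath
  have hqd : ∀ d ∈ p.bypass.darts,
      D.dir d.toProd.1 d.toProd.2 ∧ ¬(d.toProd.1 = u ∧ d.toProd.2 = v) :=
    fun d hdq => hp d (p.darts_bypass_subset hdq)
  have hedge : s(u, v) ∉ p.bypass.edges := by
    intro he
    rw [SimpleGraph.Walk.edges, List.mem_map] at he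
    obtain ⟨d, hdq, hde⟩ := he
    have hde' : d.toProd.1 = u ∧ d.toProd.2 = v ∨ d.toProd.1 = v ∧ d.toProd.2 = u := by
      have : s(d.toProd.1, d.toProd.2) = s(u, v) := hde
      exact Sym2.eq_iff.mp this
    rcases hde' with ⟨ha, hb⟩ | ⟨ha, hb⟩
    · exact (hqd d hdq).2 ⟨ha, hb⟩
    · exact D.asymm u v hdir (ha ▸ hb ▸ (hqd d hdq).1)
  have hcyc : (SimpleGraph.Walk.cons hadj p.bypass.reverse).IsCycle := by
    rw [SimpleGraph.Walk.cons_isCycle_iff]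
    refine ⟨hqp.reverse, ?_⟩
    rw [SimpleGraph.Walk.edges_reverse, List.mem_reverse]
    exact hedge
  obtain ⟨⟨d₁, hd₁, d₂, hd₂, hne12, hf₁, hf₂⟩, -⟩ := h2 u _ hcyc
  have key : ∀ d ∈ (SimpleGraph.Walk.cons hadj p.bypass.reverse).darts,
      D.dir d.toProd.1 d.toProd.2 → d = SimpleGraph.Dart.mk (u, v) hadj := by
    intro d hdm hdf
    rw [SimpleGraph.Walk.darts_cons, List.mem_cons] at hdm
    rcases hdm with rfl | hdm
    · rfl
    · rw [SimpleGraph.Walk.mem_darts_reverse] at hdm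
      have hsym := (hqd d.symm hdm).1
      simp only [SimpleGraph.Dart.symm_toProd, Prod.fst_swap, Prod.snd_swap] at hsym
      exact absurd hdf (D.asymm _ _ hsym)
  exact hne12 ((key d₁ hd₁ hf₁).trans (key d₂ hd₂ hf₂).symm)

private lemma cycle_decomp {v : V} {C : G.Walk v v} (hC : C.IsCycle) {d : G.Dart}
    (hd : d ∈ C.darts) :
    ∃ p : G.Walk d.toProd.2 d.toProd.1,
      ∀ e ∈ p.darts, e ∈ C.darts ∧ e.edge ≠ d.edge := by
  classical
  have ha : d.toProd.1 ∈ C.support := SimpleGraph.Walk.dart_fst_mem_support_of_mem_darts C hd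
  have hC' : (C.rotate _ ha).IsCycle := hC.rotate ha
  have hperm : (C.rotate _ ha).darts ~r C.darts := C.rotate_darts _ ha
  have hd' : d ∈ (C.rotate _ ha).darts := hperm.perm.mem_iff.mpr hd
  obtain ⟨w, hadj, q, hq⟩ := SimpleGraph.Walk.not_nil_iff.mp hC'.not_nil
  have hqs : q.support.Nodup := by
    have := hC'.support_nodup
    rw [hq, SimpleGraph.Walk.support_cons, List.tail_cons] at this
    exact this
  have hql : q.support.dropLast ++ [d.toProd.1] = q.support := by
    conv_rhs => rw [← List.dropLast_append_getLast (SimpleGraph.Walk.support_ne_nil q)]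
    rw [SimpleGraph.Walk.getLast_support]
  have hqs' : (q.support.dropLast ++ [d.toProd.1]).Nodup := by rw [hql]; exact hqs
  rw [List.nodup_append] at hqs'
  have hnodup : ((C.rotate _ ha).darts.map (·.fst)).Nodup := by
    rw [hq, SimpleGraph.Walk.darts_cons, List.map_cons, SimpleGraph.Walk.map_fst_darts]
    refine List.nodup_cons.mpr ⟨fun hmem => ?_, hqs'.1⟩
    exact hqs'.2.2 _ hmem _ (List.mem_singleton_self _) rfl
  have hd₀ : (⟨(d.toProd.1, w), hadj⟩ : G.Dart) ∈ (C.rotate _ ha).darts := by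
    rw [hq, SimpleGraph.Walk.darts_cons]
    exact List.mem_cons_self
  have hdd : d = (⟨(d.toProd.1, w), hadj⟩ : G.Dart) :=
    List.inj_on_of_nodup_map hnodup hd' hd₀ rfl
  have hw : d.toProd.2 = w := congrArg (fun x => x.toProd.2) hdd
  subst hw
  refine ⟨q, fun e he => ?_⟩
  have heC' : e ∈ (C.rotate _ ha).darts := by
    rw [hq, SimpleGraph.Walk.darts_cons]
    exact List.mem_cons_of_mem _ he
  refine ⟨hperm.perm.mem_iff.mp heC', fun hee => ?_⟩
  have hnd : (C.rotate _ ha).edges.Nodup := hC'.isCircuit.isTrail.edges_nodup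
  rw [hq, SimpleGraph.Walk.edges_cons, List.nodup_cons] at hnd
  have hde : d.edge = s(d.toProd.1, d.toProd.2) := rfl
  refine hnd.1 ?_
  rw [← hde, ← hee]
  exact List.mem_map_of_mem he

private lemma two_bwd (D : Orient G) (hac : IsAcyclicRel D.dir)
    (hnd : ∀ u v, ¬ DependentArc D.dir u v) {v : V} (C : G.Walk v v) (hC : C.IsCycle) :
    ∃ d₁ ∈ C.darts, ∃ d₂ ∈ C.darts, d₁ ≠ d₂ ∧
      D.dir d₁.toProd.2 d₁.toProd.1 ∧ D.dir d₂.toProd.2 d₂.toProd.1 := by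
  by_contra hcon
  push_neg at hcon
  by_cases hex : ∃ d ∈ C.darts, D.dir d.toProd.2 d.toProd.1
  · obtain ⟨d, hdC, hbd⟩ := hex
    have hfwd : ∀ e ∈ C.darts, e.edge ≠ d.edge → D.dir e.toProd.1 e.toProd.2 := by
      intro e heC hee
      have hne : d ≠ e := fun h => hee (by rw [h])
      rcases D.adj_dir _ _ e.adj with h | h
      · exact h
      · exact absurd h (hcon d hdC e heC hne hbd)
    obtain ⟨p, hp⟩ := cycle_decomp hC hdC
    have hchain : Relation.ReflTransGen
        (fun a b => D.dir a b ∧ ¬(a = d.toProd.2 ∧ b = d.toProd.1)) d.toProd.2 d.toProd.1 := by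
      refine walk_chain (fun a b h => D.dir_adj a b h.1) p fun e he => ?_
      obtain ⟨heC, hee⟩ := hp e he
      refine ⟨hfwd e heC hee, fun hh => hee (dart_edge_swap hh.1 hh.2)⟩
    exact hnd _ _ (dep_of_chain D hbd hchain)
  · push_neg at hex
    have hfwd : ∀ e ∈ C.darts, D.dir e.toProd.1 e.toProd.2 := fun e he =>
      (D.adj_dir _ _ e.adj).resolve_right (hex e he)
    obtain ⟨w, hadj, q, hq⟩ := SimpleGraph.Walk.not_nil_iff.mp hC.not_nil
    subst hq
    have h1 : D.dir v w := hfwd ⟨(v, w), hadj⟩ (by simp)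
    have h2 : Relation.ReflTransGen D.dir w v :=
      walk_chain (D.dir_adj) q fun e he => hfwd e (by simp [SimpleGraph.Walk.darts_cons, he])
    exact hac v w h1 h2

private lemma two_fwd (D : Orient G) (hac : IsAcyclicRel D.dir)
    (hnd : ∀ u v, ¬ DependentArc D.dir u v) {v : V} (C : G.Walk v v) (hC : C.IsCycle) :
    ∃ d₁ ∈ C.darts, ∃ d₂ ∈ C.darts, d₁ ≠ d₂ ∧
      D.dir d₁.toProd.1 d₁.toProd.2 ∧ D.dir d₂.toProd.1 d₂.toProd.2 := by
  by_contra hcon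
  push_neg at hcon
  by_cases hex : ∃ d ∈ C.darts, D.dir d.toProd.1 d.toProd.2
  · obtain ⟨d, hdC, hfd⟩ := hex
    have hbwd : ∀ e ∈ C.darts, e.edge ≠ d.edge → D.dir e.toProd.2 e.toProd.1 := by
      intro e heC hee
      have hne : d ≠ e := fun h => hee (by rw [h])
      rcases D.adj_dir _ _ e.adj with h | h
      · exact absurd h (hcon d hdC e heC hne hfd)
      · exact h
    obtain ⟨p, hp⟩ := cycle_decomp hC hdC
    have hchain : Relation.ReflTransGen
        (fun a b => D.dir a b ∧ ¬(a = d.toProd.1 ∧ b = d.toProd.2)) d.toProd.1 d.toProd.2 := by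
      refine walk_chain (fun a b h => D.dir_adj a b h.1) p.reverse fun e he => ?_
      rw [SimpleGraph.Walk.mem_darts_reverse] at he
      obtain ⟨heC, hee⟩ := hp e.symm he
      have hb := hbwd e.symm heC hee
      simp only [SimpleGraph.Dart.symm_toProd, Prod.fst_swap, Prod.snd_swap] at hb hee
      refine ⟨hb, fun hh => ?_⟩
      refine hee (dart_edge_swap ?_ ?_) <;>
        simp [SimpleGraph.Dart.symm_toProd, hh.1, hh.2]
    exact hnd _ _ (dep_of_chain D hfd hchain)
  · push_neg at hex
    have hbwd : ∀ e ∈ C.darts, D.dir e.toProd.2 e.toProd.1 := fun e he =>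
      (D.adj_dir _ _ e.adj).resolve_left (hex e he)
    obtain ⟨w, hadj, q, hq⟩ := SimpleGraph.Walk.not_nil_iff.mp hC.not_nil
    subst hq
    have h1 : D.dir w v := hbwd ⟨(v, w), hadj⟩ (by simp)
    have h2 : Relation.ReflTransGen D.dir v w := by
      refine walk_chain (D.dir_adj) q.reverse fun e he => ?_
      rw [SimpleGraph.Walk.mem_darts_reverse] at he
      have := hbwd e.symm (by simp [SimpleGraph.Walk.darts_cons, he])
      simpa only [SimpleGraph.Dart.symm_toProd, Prod.fst_swap, Prod.snd_swap] using this
    exact hac w v h1 h2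

private lemma twoGood_of_no_dep (D : Orient G) (hac : IsAcyclicRel D.dir)
    (hnd : ∀ u v, ¬ DependentArc D.dir u v) : TwoGood (G := G) D.dir :=
  fun v C hC => ⟨two_fwd D hac hnd C hC, two_bwd D hac hnd C hC⟩

private noncomputable def baseOrient (G : SimpleGraph V) : Orient G where
  dir u v := G.Adj u v ∧ WellOrderingRel u v
  dir_adj u v h := h.1
  adj_dir u v h := by
    rcases trichotomous_of WellOrderingRel u v with h' | rfl | h'
    · exact Or.inl ⟨h, h'⟩
    · exact absurd h (G.loopless.irrefl u)
    · exact Or.inr ⟨h.symm, h'⟩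
  asymm := fun u v h h' =>
    irrefl_of WellOrderingRel u (trans_of WellOrderingRel h.2 h'.2)

private lemma baseOrient_acyclic (G : SimpleGraph V) : IsAcyclicRel (baseOrient G).dir := by
  intro u v h hc
  have key : ∀ {x y : V}, Relation.ReflTransGen (baseOrient G).dir x y →
      x = y ∨ WellOrderingRel x y := by
    intro x y hxy
    induction hxy with
    | refl => exact Or.inl rfl
    | tail _ hbc ih =>
      rcases ih with rfl | h'
      · exact Or.inr hbc.2
      · exact Or.inr (trans_of WellOrderingRel h' hbc.2)
  rcases key hc with rfl | h'
  · exact irrefl_of WellOrderingRel _ h.2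
  · exact irrefl_of WellOrderingRel _ (trans_of WellOrderingRel h.2 h')

end Aux

theorem dmin_eq_zero_iff_twoGood [Finite V] (G : SimpleGraph V) :
    dmin G = 0 ↔ ∃ D : Orient G, IsAcyclicRel D.dir ∧ TwoGood (G := G) D.dir := by
  have hiff : ∀ D : Orient G, (numDependent D = 0 ↔ ∀ u v, ¬ DependentArc D.dir u v) := by
    intro D
    rw [numDependent, Set.ncard_eq_zero (Set.toFinite _), Set.eq_empty_iff_forall_notMem]
    constructor
    · intro h u v hd
      exact h (u, v) hd
    · intro h p hp
      exact h p.1 p.2 hp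
  unfold dmin
  constructor
  · intro h
    have h0 : 0 ∈ {n | ∃ D : Orient G, IsAcyclicRel D.dir ∧ numDependent D = n} := by
      rcases Nat.sInf_eq_zero.mp h with h0 | hemp
      · exact h0
      · exact absurd hemp (Set.nonempty_iff_ne_empty.mp
          ⟨numDependent (baseOrient G), baseOrient G, baseOrient_acyclic G, rfl⟩)
    obtain ⟨D, hac, hnum⟩ := h0
    exact ⟨D, hac, twoGood_of_no_dep D hac ((hiff D).mp hnum)⟩
  · rintro ⟨D, hac, h2⟩
    exact Nat.sInf_eq_zero.mpr (Or.inl ⟨D, hac, (hiff D).mpr (no_dep_of_twoGood D hac h2)⟩)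
end

section
/- Let G be a graph on vertices ⟨0,0⟩,…,⟨0,n−1⟩ and let S be an independent set of vertices of G. Then the subgraph of the Mycielskian M(G) induced on (V(G) ∖ S) ∪ S′, where S′ = {⟨1,j⟩ : ⟨0,j⟩ ∈ S}, is isomorphic to G. -/
variable {V : Type*}

theorem induced_isomorphic_of_independent (G : SimpleGraph V) (S : Set V)
    (hS : ∀ a ∈ S, ∀ b ∈ S, ¬ G.Adj a b) :
    Nonempty (G ≃g ((genMycielski G 1).induce
      {x : Option (Fin 2 × V) | (∃ j, j ∉ S ∧ x = some (0, j)) ∨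
        (∃ j, j ∈ S ∧ x = some (1, j))})) := by
  classical
  refine ⟨⟨⟨fun v => ⟨if v ∈ S then some (1, v) else some (0, v), ?_⟩,
      fun x => match x with
        | ⟨some (_, j), _⟩ => j
        | ⟨none, h⟩ => absurd h (by simp), ?_, ?_⟩, ?_⟩⟩
  · by_cases hv : v ∈ S <;> simp [hv]
  · intro v
    by_cases hv : v ∈ S <;> simp [hv]
  · rintro ⟨x, hx⟩
    rcases hx with ⟨j, hj, rfl⟩ | ⟨j, hj, rfl⟩ <;> simp [hj]
  · intro v w
    by_cases hv : v ∈ S <;> by_cases hw : w ∈ S <;>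
      simp [genMycielski, SimpleGraph.comap, hv, hw]
    exact fun h => absurd h (hS v hv w hw)
end

section
/- Let G be a triangle-free graph with at least two edges. For any two edges e₁, e₂ of M(G) − u, the graph M(G) − u − {e₁, e₂} contains a subgraph isomorphic to G. -/
variable {V : Type*}

/-- The Mycielskian `M(G)` with the apex vertex `u` deleted. -/
def MyDelU (G : SimpleGraph V) : SimpleGraph {x : Option (Fin 2 × V) // x ≠ none} :=
  SimpleGraph.comap Subtype.val (genMycielski G 1)

/-- The copy of a vertex of `G` at level `0` inside `M(G) - u`. -/
def lvl0 (a : V) : {x : Option (Fin 2 × V) // x ≠ none} :=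
  ⟨some (0, a), Option.some_ne_none _⟩

def lvl1 (a : V) : {x : Option (Fin 2 × V) // x ≠ none} :=
  ⟨some (1, a), Option.some_ne_none _⟩

lemma lvl0_inj : Function.Injective (lvl0 : V → _) := by
  intro a b h
  simpa [lvl0] using h

lemma lvl1_inj : Function.Injective (lvl1 : V → _) := by
  intro a b h
  simpa [lvl1] using h

lemma lvl0_ne_lvl1 (a b : V) : lvl0 a ≠ lvl1 b := by
  simp [lvl0, lvl1, Subtype.ext_iff, Prod.ext_iff]

lemma adj00 {G : SimpleGraph V} {a b : V} (h : G.Adj a b) :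
    (MyDelU G).Adj (lvl0 a) (lvl0 b) :=
  ⟨h, Or.inl ⟨rfl, rfl⟩⟩

lemma adj01 {G : SimpleGraph V} {a b : V} (h : G.Adj a b) :
    (MyDelU G).Adj (lvl0 a) (lvl1 b) :=
  ⟨h, Or.inr (Or.inl rfl)⟩

lemma edge_class {G : SimpleGraph V} {e : Sym2 {x : Option (Fin 2 × V) // x ≠ none}}
    (he : e ∈ (MyDelU G).edgeSet) :
    ∃ a b, G.Adj a b ∧ (e = s(lvl0 a, lvl0 b) ∨ e = s(lvl0 a, lvl1 b)) := by
  induction e using Sym2.ind with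
  | _ x y =>
    rw [SimpleGraph.mem_edgeSet] at he
    rcases x with ⟨(_ | ⟨i, a⟩), hx⟩
    · exact absurd rfl hx
    rcases y with ⟨(_ | ⟨j, b⟩), hy⟩
    · exact absurd rfl hy
    obtain ⟨hadj, hcond⟩ := he
    fin_cases i <;> fin_cases j
    · exact ⟨a, b, hadj, Or.inl rfl⟩
    · exact ⟨a, b, hadj, Or.inr rfl⟩
    · exact ⟨b, a, hadj.symm, Or.inr (Sym2.eq_swap)⟩
    · simp at hcond

open Classical in
noncomputable def mapS (S : Set V) (a : V) : {x : Option (Fin 2 × V) // x ≠ none} :=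
  if a ∈ S then lvl1 a else lvl0 a

lemma mapS_inj (S : Set V) : Function.Injective (mapS S) := by
  classical
  intro a b h
  unfold mapS at h
  split_ifs at h
  · exact lvl1_inj h
  · exact absurd h (lvl0_ne_lvl1 b a).symm
  · exact absurd h (lvl0_ne_lvl1 a b)
  · exact lvl0_inj h

lemma build {G : SimpleGraph V} (S : Set V)
    (hInd : ∀ ⦃a b⦄, G.Adj a b → a ∈ S → b ∉ S)
    (e₁ e₂ : Sym2 {x : Option (Fin 2 × V) // x ≠ none})
    (hAv : ∀ ⦃a b⦄, G.Adj a b → s(mapS S a, mapS S b) ≠ e₁ ∧ s(mapS S a, mapS S b) ≠ e₂) :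
    ∃ f : G →g (MyDelU G).deleteEdges {e₁, e₂}, Function.Injective f := by
  classical
  refine ⟨⟨mapS S, ?_⟩, mapS_inj S⟩
  intro a b hab
  rw [SimpleGraph.deleteEdges_adj]
  constructor
  · unfold mapS
    split_ifs with ha hb hb
    · exact absurd hb (hInd hab ha)
    · exact ((adj01 hab.symm).symm : (MyDelU G).Adj (lvl1 a) (lvl0 b))
    · exact adj01 hab
    · exact adj00 hab
  · intro hmem
    rcases hmem with h | h
    · exact (hAv hab).1 h
    · exact (hAv hab).2 h

lemma mixed_ne (a b c d : V) : s(lvl0 a, lvl1 b) ≠ s(lvl0 c, lvl0 d) := by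
  intro h
  rw [Sym2.eq_iff] at h
  rcases h with ⟨h1, h2⟩ | ⟨h1, h2⟩
  · exact lvl0_ne_lvl1 d b h2.symm
  · exact lvl0_ne_lvl1 c b h2.symm

lemma cross_ne {b d : V} (a c : V) (hbd : b ≠ d) :
    s(lvl0 a, lvl1 b) ≠ s(lvl0 c, lvl1 d) := by
  intro h
  rw [Sym2.eq_iff] at h
  rcases h with ⟨h1, h2⟩ | ⟨h1, h2⟩
  · exact hbd (lvl1_inj h2)
  · exact lvl0_ne_lvl1 a d h1

lemma lvl00_ne {x y a : V} (b : V) (hx : x ≠ a) (hy : y ≠ a) :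
    s(lvl0 x, lvl0 y) ≠ s(lvl0 a, lvl0 b) := by
  intro h
  rw [Sym2.eq_iff] at h
  rcases h with ⟨h1, h2⟩ | ⟨h1, h2⟩
  · exact hx (lvl0_inj h1)
  · exact hy (lvl0_inj h2)

lemma lvl00_ne2 {x y b : V} (a : V) (hx : x ≠ b) (hy : y ≠ b) :
    s(lvl0 x, lvl0 y) ≠ s(lvl0 a, lvl0 b) := by
  intro h
  rw [Sym2.eq_iff] at h
  rcases h with ⟨h1, h2⟩ | ⟨h1, h2⟩
  · exact hy (lvl0_inj h2)
  · exact hx (lvl0_inj h1)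

lemma mapS_mem {S : Set V} {x : V} (hx : x ∈ S) : mapS S x = lvl1 x := by
  simp [mapS, hx]

lemma mapS_not_mem {S : Set V} {x : V} (hx : x ∉ S) : mapS S x = lvl0 x := by
  simp [mapS, hx]

/-- Given an independent set `S` meeting every "constraint", choose images. -/
lemma main_LC {G : SimpleGraph V} {a b : V} (c d : V) (hab : G.Adj a b) :
    ∃ S : Set V, (∀ ⦃x y⦄, G.Adj x y → x ∈ S → y ∉ S) ∧
      ∀ ⦃x y⦄, G.Adj x y → s(mapS S x, mapS S y) ≠ s(lvl0 a, lvl0 b) ∧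
        s(mapS S x, mapS S y) ≠ s(lvl0 c, lvl1 d) := by
  by_cases hda : d = a
  · subst hda
    refine ⟨{b}, ?_, ?_⟩
    · rintro x y hxy rfl rfl
      exact G.loopless.irrefl _ hxy
    · intro x y hxy
      by_cases hx : x ∈ ({b} : Set V) <;> by_cases hy : y ∈ ({b} : Set V)
      · exact absurd hy (fun h => G.loopless.irrefl _ (hx ▸ h ▸ hxy))
      · rw [mapS_mem hx, mapS_not_mem hy, Sym2.eq_swap]
        rw [Set.mem_singleton_iff] at hx; subst hx
        constructor
        · exact mixed_ne _ _ _ _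
        · exact cross_ne _ _ hab.ne'
      · rw [mapS_mem hy, mapS_not_mem hx]
        rw [Set.mem_singleton_iff] at hy; subst hy
        constructor
        · exact mixed_ne _ _ _ _
        · exact cross_ne _ _ hab.ne'
      · rw [mapS_not_mem hx, mapS_not_mem hy]
        rw [Set.mem_singleton_iff] at hx hy
        constructor
        · exact lvl00_ne2 _ hx hy
        · exact (mixed_ne _ _ _ _).symm
  · refine ⟨{a}, ?_, ?_⟩
    · rintro x y hxy rfl rfl
      exact G.loopless.irrefl _ hxy
    · intro x y hxy
      by_cases hx : x ∈ ({a} : Set V) <;> by_cases hy : y ∈ ({a} : Set V)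
      · exact absurd hy (fun h => G.loopless.irrefl _ (hx ▸ h ▸ hxy))
      · rw [mapS_mem hx, mapS_not_mem hy, Sym2.eq_swap]
        rw [Set.mem_singleton_iff] at hx; subst hx
        constructor
        · exact mixed_ne _ _ _ _
        · exact cross_ne _ _ (fun h => hda h.symm)
      · rw [mapS_mem hy, mapS_not_mem hx]
        rw [Set.mem_singleton_iff] at hy; subst hy
        constructor
        · exact mixed_ne _ _ _ _
        · exact cross_ne _ _ (fun h => hda h.symm)
      · rw [mapS_not_mem hx, mapS_not_mem hy]
        rw [Set.mem_singleton_iff] at hx hy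
        constructor
        · exact lvl00_ne _ hx hy
        · exact (mixed_ne _ _ _ _).symm

lemma main_LL_core {G : SimpleGraph V} {a b c d p q : V}
    (hp : p = a ∨ p = b) (hq : q = c ∨ q = d) (hnadj : ¬ G.Adj p q) :
    ∃ S : Set V, (∀ ⦃x y⦄, G.Adj x y → x ∈ S → y ∉ S) ∧
      ∀ ⦃x y⦄, G.Adj x y → s(mapS S x, mapS S y) ≠ s(lvl0 a, lvl0 b) ∧
        s(mapS S x, mapS S y) ≠ s(lvl0 c, lvl0 d) := by
  refine ⟨{p, q}, ?_, ?_⟩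
  · rintro x y hxy (rfl | rfl) (rfl | rfl)
    · exact G.loopless.irrefl _ hxy
    · exact hnadj hxy
    · exact hnadj hxy.symm
    · exact G.loopless.irrefl _ hxy
  · intro x y hxy
    by_cases hx : x ∈ ({p, q} : Set V) <;> by_cases hy : y ∈ ({p, q} : Set V)
    · exact absurd hxy (by
        rcases hx with rfl | rfl <;> rcases hy with rfl | rfl
        · exact G.loopless.irrefl _
        · exact hnadj
        · exact fun h => hnadj h.symm
        · exact G.loopless.irrefl _)
    · rw [mapS_mem hx, mapS_not_mem hy, Sym2.eq_swap]
      exact ⟨mixed_ne _ _ _ _, mixed_ne _ _ _ _⟩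
    · rw [mapS_mem hy, mapS_not_mem hx]
      exact ⟨mixed_ne _ _ _ _, mixed_ne _ _ _ _⟩
    · rw [mapS_not_mem hx, mapS_not_mem hy]
      rw [Set.mem_insert_iff, Set.mem_singleton_iff] at hx hy
      push_neg at hx hy
      constructor
      · rcases hp with rfl | rfl
        · exact lvl00_ne _ hx.1 hy.1
        · exact lvl00_ne2 _ hx.1 hy.1
      · rcases hq with rfl | rfl
        · exact lvl00_ne _ hx.2 hy.2
        · exact lvl00_ne2 _ hx.2 hy.2

lemma main_LL {G : SimpleGraph V} (htf : G.CliqueFree 3) {a b c d : V}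
    (hab : G.Adj a b) (hcd : G.Adj c d) :
    ∃ S : Set V, (∀ ⦃x y⦄, G.Adj x y → x ∈ S → y ∉ S) ∧
      ∀ ⦃x y⦄, G.Adj x y → s(mapS S x, mapS S y) ≠ s(lvl0 a, lvl0 b) ∧
        s(mapS S x, mapS S y) ≠ s(lvl0 c, lvl0 d) := by
  classical
  by_cases h1 : G.Adj a c
  · by_cases h2 : G.Adj a d
    · exact absurd (SimpleGraph.is3Clique_triple_iff.mpr ⟨h1, h2, hcd⟩) (htf _)
    · exact main_LL_core (Or.inl rfl) (Or.inr rfl) h2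
  · exact main_LL_core (Or.inl rfl) (Or.inl rfl) h1

theorem subgraph_after_two_edge_deletion (G : SimpleGraph V)
    (htf : G.CliqueFree 3) (h2 : 2 ≤ G.edgeSet.ncard)
    (e₁ e₂ : Sym2 {x : Option (Fin 2 × V) // x ≠ none})
    (he₁ : e₁ ∈ (MyDelU G).edgeSet) (he₂ : e₂ ∈ (MyDelU G).edgeSet)
    (hne : e₁ ≠ e₂) :
    ∃ f : G →g (MyDelU G).deleteEdges {e₁, e₂}, Function.Injective f := by
  obtain ⟨a, b, hab, hc1⟩ := edge_class he₁
  obtain ⟨c, d, hcd, hc2⟩ := edge_class he₂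
  rcases hc1 with rfl | rfl <;> rcases hc2 with rfl | rfl
  · obtain ⟨S, hI, hA⟩ := main_LL htf hab hcd
    exact build S hI _ _ hA
  · obtain ⟨S, hI, hA⟩ := main_LC c d hab
    exact build S hI _ _ hA
  · obtain ⟨S, hI, hA⟩ := main_LC a b hcd
    exact build S hI _ _ (fun x y h => ⟨(hA h).2, (hA h).1⟩)
  · refine build ∅ (fun x y _ hx => absurd hx (Set.notMem_empty x)) _ _ ?_
    intro x y hxy
    rw [mapS_not_mem (Set.notMem_empty x), mapS_not_mem (Set.notMem_empty y)]
    exact ⟨(mixed_ne _ _ _ _).symm, (mixed_ne _ _ _ _).symm⟩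
end

section
/- Let G be a triangle-free graph with at least three edges. For any three edges e₁, e₂, e₃ of G, the graph M(G) − u − {e₁, e₂, e₃} contains a subgraph isomorphic to G. -/
variable {V : Type*}

set_option maxRecDepth 100000 in
set_option synthInstance.maxSize 4000 in
set_option synthInstance.maxHeartbeats 1000000 in
set_option maxHeartbeats 4000000 in
lemma boolLemma : ∀ (vab vac vad vae vaf vbc vbd vbe vbf vcd vce vcf vde vdf vef : Bool),
  vab = true → vcd = true → vef = true →
  (¬(vab=true ∧ vbc=true ∧ vac=true)) → (¬(vab=true ∧ vbd=true ∧ vad=true)) → (¬(vab=true ∧ vbe=true ∧ vae=true)) → (¬(vab=true ∧ vbf=true ∧ vaf=true)) → (¬(vac=true ∧ vcd=true ∧ vad=true)) → (¬(vac=true ∧ vce=true ∧ vae=true)) → (¬(vac=true ∧ vcf=true ∧ vaf=true)) → (¬(vad=true ∧ vde=true ∧ vae=true)) → (¬(vad=true ∧ vdf=true ∧ vaf=true)) → (¬(vae=true ∧ vef=true ∧ vaf=true)) → (¬(vbc=true ∧ vcd=true ∧ vbd=true)) → (¬(vbc=true ∧ vce=true ∧ vbe=true)) → (¬(vbc=true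 ∧ vcf=true ∧ vbf=true)) → (¬(vbd=true ∧ vde=true ∧ vbe=true)) → (¬(vbd=true ∧ vdf=true ∧ vbf=true)) → (¬(vbe=true ∧ vef=true ∧ vbf=true)) → (¬(vcd=true ∧ vde=true ∧ vce=true)) → (¬(vcd=true ∧ vdf=true ∧ vcf=true)) → (¬(vce=true ∧ vef=true ∧ vcf=true)) → (¬(vde=true ∧ vef=true ∧ vdf=true)) →
  ((vac=false ∧ vae=false ∧ vce=false) ∨ (vac=false ∧ vaf=false ∧ vcf=false) ∨ (vad=false ∧ vae=false ∧ vde=false) ∨ (vad=false ∧ vaf=false ∧ vdf=false) ∨ (vbc=false ∧ vbe=false ∧ vce=false) ∨ (vbc=false ∧ vbf=false ∧ vcf=false) ∨ (vbd=false ∧ vbe=false ∧ vde=false) ∨ (vbd=false ∧ vbf=false ∧ vdf=false)) := by decide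


open Classical in
lemma construct (G : SimpleGraph V) (a b c d e f : V)
    (x y z : V) (hx : x = a ∨ x = b) (hy : y = c ∨ y = d) (hz : z = e ∨ z = f)
    (hxy : ¬G.Adj x y) (hxz : ¬G.Adj x z) (hyz : ¬G.Adj y z) :
    ∃ g : G →g (MyDelU G).deleteEdges
        {Sym2.map lvl0 s(a,b), Sym2.map lvl0 s(c,d), Sym2.map lvl0 s(e,f)},
      Function.Injective g := by
  classical
  set S : V → Prop := fun v => v = x ∨ v = y ∨ v = z with hS
  have notadj : ∀ u w, S u → S w → ¬ G.Adj u w := by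
    rintro u w (rfl|rfl|rfl) (rfl|rfl|rfl) h
    · exact G.loopless.irrefl _ h
    · exact hxy h
    · exact hxz h
    · exact hxy h.symm
    · exact G.loopless.irrefl _ h
    · exact hyz h
    · exact hxz h.symm
    · exact hyz h.symm
    · exact G.loopless.irrefl _ h
  have notlvl0 : ∀ (p q u w : V),
      s((⟨some (1, u), Option.some_ne_none _⟩ : {o : Option (Fin 2 × V) // o ≠ none}),
        (⟨some (0, w), Option.some_ne_none _⟩ : {o : Option (Fin 2 × V) // o ≠ none}))
        ≠ Sym2.map lvl0 s(p, q) := by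
    intro p q u w h
    rw [Sym2.map_pair_eq, Sym2.eq_iff] at h
    rcases h with ⟨h1, _⟩ | ⟨h1, _⟩ <;>
      simpa [lvl0, Subtype.ext_iff, Prod.ext_iff, Fin.ext_iff] using h1
  refine ⟨⟨fun v => if S v then ⟨some (1, v), Option.some_ne_none _⟩
      else ⟨some (0, v), Option.some_ne_none _⟩, ?_⟩, ?_⟩
  · intro u w huw
    by_cases hu : S u <;> by_cases hw : S w <;>
      simp only [hu, hw, if_pos, if_neg, if_true, if_false]
    · exact absurd huw (notadj u w hu hw)
    · rw [SimpleGraph.deleteEdges_adj]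
      refine ⟨⟨huw, Or.inr (Or.inr rfl)⟩, ?_⟩
      intro h
      simp only [Set.mem_insert_iff, Set.mem_singleton_iff] at h
      rcases h with h | h | h
      · exact notlvl0 a b u w h
      · exact notlvl0 c d u w h
      · exact notlvl0 e f u w h
    · rw [SimpleGraph.deleteEdges_adj]
      refine ⟨⟨huw, Or.inr (Or.inl rfl)⟩, ?_⟩
      intro h
      simp only [Set.mem_insert_iff, Set.mem_singleton_iff] at h
      rw [Sym2.eq_swap] at h
      rcases h with h | h | h
      · exact notlvl0 a b w u h
      · exact notlvl0 c d w u h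
      · exact notlvl0 e f w u h
    · rw [SimpleGraph.deleteEdges_adj]
      refine ⟨⟨huw, Or.inl ⟨rfl, rfl⟩⟩, ?_⟩
      intro h
      have key : ∀ (p q w' : V), S w' → (w' = p ∨ w' = q) →
          s((⟨some (0, u), Option.some_ne_none _⟩ : {o : Option (Fin 2 × V) // o ≠ none}),
            (⟨some (0, w), Option.some_ne_none _⟩ : {o : Option (Fin 2 × V) // o ≠ none}))
            ≠ Sym2.map lvl0 s(p, q) := by
        intro p q w' hw' hpq heq
        rw [Sym2.map_pair_eq, Sym2.eq_iff] at heq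
        have hup : u = p ∧ w = q ∨ u = q ∧ w = p := by
          rcases heq with ⟨h1, h2⟩ | ⟨h1, h2⟩
          · exact Or.inl ⟨by simpa [lvl0, Subtype.ext_iff, Prod.ext_iff] using h1,
              by simpa [lvl0, Subtype.ext_iff, Prod.ext_iff] using h2⟩
          · exact Or.inr ⟨by simpa [lvl0, Subtype.ext_iff, Prod.ext_iff] using h1,
              by simpa [lvl0, Subtype.ext_iff, Prod.ext_iff] using h2⟩
        rcases hpq with rfl | rfl <;> rcases hup with ⟨rfl, rfl⟩ | ⟨rfl, rfl⟩
        · exact hu hw'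
        · exact hw hw'
        · exact hw hw'
        · exact hu hw'
      simp only [Set.mem_insert_iff, Set.mem_singleton_iff] at h
      rcases h with h | h | h
      · exact key a b x (Or.inl rfl) hx h
      · exact key c d y (Or.inr (Or.inl rfl)) hy h
      · exact key e f z (Or.inr (Or.inr rfl)) hz h
  · intro u w h
    have h' : (if S u then (⟨some (1, u), Option.some_ne_none _⟩ :
          {o : Option (Fin 2 × V) // o ≠ none}) else ⟨some (0, u), Option.some_ne_none _⟩) =
        (if S w then ⟨some (1, w), Option.some_ne_none _⟩
          else ⟨some (0, w), Option.some_ne_none _⟩) := h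
    by_cases hu : S u <;> by_cases hw : S w <;>
        simp only [hu, hw, if_pos, if_neg, if_true, if_false] at h' <;>
      simpa [Subtype.ext_iff, Prod.ext_iff, Fin.ext_iff] using h'

theorem subgraph_after_three_edge_deletion (G : SimpleGraph V)
    (htf : G.CliqueFree 3) (h3 : 3 ≤ G.edgeSet.ncard)
    (e₁ e₂ e₃ : Sym2 V)
    (he₁ : e₁ ∈ G.edgeSet) (he₂ : e₂ ∈ G.edgeSet) (he₃ : e₃ ∈ G.edgeSet)
    (h12 : e₁ ≠ e₂) (h13 : e₁ ≠ e₃) (h23 : e₂ ≠ e₃) :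
    ∃ f : G →g (MyDelU G).deleteEdges
        {Sym2.map lvl0 e₁, Sym2.map lvl0 e₂, Sym2.map lvl0 e₃},
      Function.Injective f := by
  classical
  have htri : ∀ p q r, G.Adj p q → G.Adj q r → G.Adj p r → False := by
    intro p q r h1 h2 h3
    exact htf {p, q, r} ((SimpleGraph.is3Clique_triple_iff).mpr ⟨h1, h3, h2⟩)
  obtain ⟨a, b, rfl⟩ : ∃ p q, e₁ = s(p, q) :=
    Sym2.inductionOn (f := fun e => ∃ p q, e = s(p, q)) e₁ fun p q => ⟨p, q, rfl⟩
  obtain ⟨c, d, rfl⟩ : ∃ p q, e₂ = s(p, q) :=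
    Sym2.inductionOn (f := fun e => ∃ p q, e = s(p, q)) e₂ fun p q => ⟨p, q, rfl⟩
  obtain ⟨e, f, rfl⟩ : ∃ p q, e₃ = s(p, q) :=
    Sym2.inductionOn (f := fun e => ∃ p q, e = s(p, q)) e₃ fun p q => ⟨p, q, rfl⟩
  rw [SimpleGraph.mem_edgeSet] at he₁ he₂ he₃
  have key := boolLemma (decide (G.Adj a b)) (decide (G.Adj a c)) (decide (G.Adj a d))
    (decide (G.Adj a e)) (decide (G.Adj a f)) (decide (G.Adj b c)) (decide (G.Adj b d))
    (decide (G.Adj b e)) (decide (G.Adj b f)) (decide (G.Adj c d)) (decide (G.Adj c e))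
    (decide (G.Adj c f)) (decide (G.Adj d e)) (decide (G.Adj d f)) (decide (G.Adj e f))
    (decide_eq_true he₁) (decide_eq_true he₂) (decide_eq_true he₃)
    (fun ⟨h1, h2, h3⟩ => htri _ _ _ (of_decide_eq_true h1) (of_decide_eq_true h2)
      (of_decide_eq_true h3))
    (fun ⟨h1, h2, h3⟩ => htri _ _ _ (of_decide_eq_true h1) (of_decide_eq_true h2)
      (of_decide_eq_true h3))
    (fun ⟨h1, h2, h3⟩ => htri _ _ _ (of_decide_eq_true h1) (of_decide_eq_true h2)
      (of_decide_eq_true h3))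
    (fun ⟨h1, h2, h3⟩ => htri _ _ _ (of_decide_eq_true h1) (of_decide_eq_true h2)
      (of_decide_eq_true h3))
    (fun ⟨h1, h2, h3⟩ => htri _ _ _ (of_decide_eq_true h1) (of_decide_eq_true h2)
      (of_decide_eq_true h3))
    (fun ⟨h1, h2, h3⟩ => htri _ _ _ (of_decide_eq_true h1) (of_decide_eq_true h2)
      (of_decide_eq_true h3))
    (fun ⟨h1, h2, h3⟩ => htri _ _ _ (of_decide_eq_true h1) (of_decide_eq_true h2)
      (of_decide_eq_true h3))
    (fun ⟨h1, h2, h3⟩ => htri _ _ _ (of_decide_eq_true h1) (of_decide_eq_true h2)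
      (of_decide_eq_true h3))
    (fun ⟨h1, h2, h3⟩ => htri _ _ _ (of_decide_eq_true h1) (of_decide_eq_true h2)
      (of_decide_eq_true h3))
    (fun ⟨h1, h2, h3⟩ => htri _ _ _ (of_decide_eq_true h1) (of_decide_eq_true h2)
      (of_decide_eq_true h3))
    (fun ⟨h1, h2, h3⟩ => htri _ _ _ (of_decide_eq_true h1) (of_decide_eq_true h2)
      (of_decide_eq_true h3))
    (fun ⟨h1, h2, h3⟩ => htri _ _ _ (of_decide_eq_true h1) (of_decide_eq_true h2)
      (of_decide_eq_true h3))
    (fun ⟨h1, h2, h3⟩ => htri _ _ _ (of_decide_eq_true h1) (of_decide_eq_true h2)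
      (of_decide_eq_true h3))
    (fun ⟨h1, h2, h3⟩ => htri _ _ _ (of_decide_eq_true h1) (of_decide_eq_true h2)
      (of_decide_eq_true h3))
    (fun ⟨h1, h2, h3⟩ => htri _ _ _ (of_decide_eq_true h1) (of_decide_eq_true h2)
      (of_decide_eq_true h3))
    (fun ⟨h1, h2, h3⟩ => htri _ _ _ (of_decide_eq_true h1) (of_decide_eq_true h2)
      (of_decide_eq_true h3))
    (fun ⟨h1, h2, h3⟩ => htri _ _ _ (of_decide_eq_true h1) (of_decide_eq_true h2)
      (of_decide_eq_true h3))
    (fun ⟨h1, h2, h3⟩ => htri _ _ _ (of_decide_eq_true h1) (of_decide_eq_true h2)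
      (of_decide_eq_true h3))
    (fun ⟨h1, h2, h3⟩ => htri _ _ _ (of_decide_eq_true h1) (of_decide_eq_true h2)
      (of_decide_eq_true h3))
    (fun ⟨h1, h2, h3⟩ => htri _ _ _ (of_decide_eq_true h1) (of_decide_eq_true h2)
      (of_decide_eq_true h3))
  rcases key with ⟨h1, h2, h3⟩ | ⟨h1, h2, h3⟩ | ⟨h1, h2, h3⟩ | ⟨h1, h2, h3⟩ |
    ⟨h1, h2, h3⟩ | ⟨h1, h2, h3⟩ | ⟨h1, h2, h3⟩ | ⟨h1, h2, h3⟩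
  · exact construct G a b c d e f a c e (Or.inl rfl) (Or.inl rfl) (Or.inl rfl)
      (of_decide_eq_false h1) (of_decide_eq_false h2) (of_decide_eq_false h3)
  · exact construct G a b c d e f a c f (Or.inl rfl) (Or.inl rfl) (Or.inr rfl)
      (of_decide_eq_false h1) (of_decide_eq_false h2) (of_decide_eq_false h3)
  · exact construct G a b c d e f a d e (Or.inl rfl) (Or.inr rfl) (Or.inl rfl)
      (of_decide_eq_false h1) (of_decide_eq_false h2) (of_decide_eq_false h3)
  · exact construct G a b c d e f a d f (Or.inl rfl) (Or.inr rfl) (Or.inr rfl)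
      (of_decide_eq_false h1) (of_decide_eq_false h2) (of_decide_eq_false h3)
  · exact construct G a b c d e f b c e (Or.inr rfl) (Or.inl rfl) (Or.inl rfl)
      (of_decide_eq_false h1) (of_decide_eq_false h2) (of_decide_eq_false h3)
  · exact construct G a b c d e f b c f (Or.inr rfl) (Or.inl rfl) (Or.inr rfl)
      (of_decide_eq_false h1) (of_decide_eq_false h2) (of_decide_eq_false h3)
  · exact construct G a b c d e f b d e (Or.inr rfl) (Or.inr rfl) (Or.inl rfl)
      (of_decide_eq_false h1) (of_decide_eq_false h2) (of_decide_eq_false h3)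
  · exact construct G a b c d e f b d f (Or.inr rfl) (Or.inr rfl) (Or.inr rfl)
      (of_decide_eq_false h1) (of_decide_eq_false h2) (of_decide_eq_false h3)
end

section
/- For any graph G and positive integer m, the generalized Mycielski graph M_m(G) is a cover graph (equivalently d_min(M_m(G)) = 0) if and only if G is bipartite. -/
variable {V : Type*}

open Relation SimpleGraph

section Generic
variable {X : Type*} {dir : X → X → Prop} {h : X → ℕ}

lemma rtg_mono (hd : ∀ a b, dir a b → h a < h b) {x y : X}
    (hxy : ReflTransGen dir x y) : h x ≤ h y := by
  induction hxy with
  | refl => exact le_refl _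
  | tail _ hbc ih => exact le_of_lt (lt_of_le_of_lt ih (hd _ _ hbc))

lemma rtg_strict (hd : ∀ a b, dir a b → h a < h b) {x y : X}
    (hxy : ReflTransGen dir x y) : x = y ∨ h x < h y := by
  induction hxy with
  | refl => exact Or.inl rfl
  | tail _ hbc ih =>
      rcases ih with rfl | ih
      · exact Or.inr (hd _ _ hbc)
      · exact Or.inr (lt_trans ih (hd _ _ hbc))

lemma acyclic_of_height (hd : ∀ a b, dir a b → h a < h b) : IsAcyclicRel dir :=
  fun u v huv hp => absurd (rtg_mono hd hp) (not_le.2 (hd u v huv))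

/-- Key lemma: an arc of height-jump ≤ 2 with no 2-step bypass is not dependent. -/
lemma no_dep (hd : ∀ a b, dir a b → h a < h b) (u v : X) (huv : dir u v)
    (h2 : h v ≤ h u + 2) (hmid : ∀ w, dir u w → dir w v → False) :
    IsAcyclicRel (reverseArc dir u v) := by
  set dir' : X → X → Prop := fun a b => dir a b ∧ ¬(a = u ∧ b = v) with hdir'
  have hd' : ∀ a b, dir' a b → h a < h b := fun a b hab => hd a b hab.1
  have nopath : ¬ ReflTransGen dir' u v := by
    intro hp
    rcases hp.cases_head with rfl | ⟨w, huw, hwv⟩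
    · exact lt_irrefl _ (hd _ _ huv)
    · rcases rtg_strict hd' hwv with rfl | hlt
      · exact huw.2 ⟨rfl, rfl⟩
      · have h1 : h u < h w := hd' _ _ huw
        rcases hwv.cases_head with rfl | ⟨w', hww', hw'v⟩
        · exact lt_irrefl _ hlt
        · have h3 : h w < h w' := hd' _ _ hww'
          have h4 : h w' ≤ h v := rtg_mono hd' hw'v
          have h5 : h w' = h v := by omega
          rcases rtg_strict hd' hw'v with rfl | hlt'
          · exact hmid w huw.1 hww'.1
          · omega
  have decomp : ∀ x y, ReflTransGen (reverseArc dir u v) x y →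
      ReflTransGen dir' x y ∨ (ReflTransGen dir' x v ∧ ReflTransGen dir' u y) := by
    intro x y hxy
    induction hxy with
    | refl => exact Or.inl ReflTransGen.refl
    | tail hxb hbc ih =>
        rcases hbc with hbc | ⟨rfl, rfl⟩
        · rcases ih with ih | ⟨ih1, ih2⟩
          · exact Or.inl (ih.tail hbc)
          · exact Or.inr ⟨ih1, ih2.tail hbc⟩
        · rcases ih with ih | ⟨ih1, _⟩
          · exact Or.inr ⟨ih, ReflTransGen.refl⟩
          · exact Or.inr ⟨ih1, ReflTransGen.refl⟩
  intro a b hab hba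
  rcases decomp _ _ hba with hba | ⟨hbv, hua⟩
  · rcases hab with hab | ⟨rfl, rfl⟩
    · exact absurd (rtg_mono hd' hba) (not_le.2 (hd _ _ hab.1))
    · exact nopath hba
  · rcases hab with hab | ⟨rfl, rfl⟩
    · exact nopath ((hua.tail hab).trans hbv)
    · exact nopath hbv
end Generic

section FourCycle
variable {X : Type*} {M : SimpleGraph X} (D : Orient M)

open Classical in
noncomputable def osig (x y : X) : ℤ := if D.dir x y then 1 else -1

lemma osig_pos {x y : X} (h : D.dir x y) : osig D x y = 1 := if_pos h

lemma osig_neg {x y : X} (h : D.dir y x) : osig D x y = -1 := if_neg (D.asymm _ _ h)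

lemma noC4 (hacy : IsAcyclicRel D.dir) {a b c d : X}
    (hab : D.dir a b) (hbc : D.dir b c) (hcd : D.dir c d) (hda : D.dir d a) : False :=
  hacy a b hab (((ReflTransGen.single hbc).tail hcd).tail hda)

lemma noShort (hdep : ∀ u v, ¬ DependentArc D.dir u v) {a b c d : X}
    (hab : D.dir a b) (hbc : D.dir b c) (hcd : D.dir c d)
    (hac : a ≠ c) (hbd : b ≠ d) (had : D.dir a d) : False := by
  refine hdep a d ⟨had, ?_⟩
  intro hacyc
  refine hacyc d a (Or.inr ⟨rfl, rfl⟩) ?_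
  have h1 : reverseArc D.dir a d a b := Or.inl ⟨hab, fun h => hbd h.2⟩
  have h2 : reverseArc D.dir a d b c :=
    Or.inl ⟨hbc, fun h => (D.dir_adj a b hab).ne h.1.symm⟩
  have h3 : reverseArc D.dir a d c d := Or.inl ⟨hcd, fun h => hac h.1.symm⟩
  exact ((ReflTransGen.single h1).tail h2).tail h3

lemma four_cycle (hacy : IsAcyclicRel D.dir) (hdep : ∀ u v, ¬ DependentArc D.dir u v)
    {x0 x1 x2 x3 : X} (h01 : M.Adj x0 x1) (h12 : M.Adj x1 x2) (h23 : M.Adj x2 x3)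
    (h30 : M.Adj x3 x0) (h02 : x0 ≠ x2) (h13 : x1 ≠ x3) :
    osig D x0 x1 + osig D x1 x2 + osig D x2 x3 + osig D x3 x0 = 0 := by
  rcases D.adj_dir _ _ h01 with d0 | d0 <;>
  rcases D.adj_dir _ _ h12 with d1 | d1 <;>
  rcases D.adj_dir _ _ h23 with d2 | d2 <;>
  rcases D.adj_dir _ _ h30 with d3 | d3
  -- 16 cases, pattern (d0,d1,d2,d3) forward=first
  · exact absurd (noC4 D hacy d0 d1 d2 d3) id
  · -- T T T B : path x0→x1→x2→x3, arc x0→x3 (dir x0 x3 = d3 reversed: d3 : dir x0 x3)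
    exact absurd (noShort D hdep d0 d1 d2 h02 h13 d3) id
  · -- T T B T : dir x3 x2, d3 : dir x3 x0; path x3→x0→x1→x2 arc x3→x2
    exact absurd (noShort D hdep d3 d0 d1 h13.symm h02 d2) id
  · -- T T B B : two forward two back
    rw [osig_pos D d0, osig_pos D d1, osig_neg D d2, osig_neg D d3]; ring
  · -- T B T T : dir x2 x1, path x2→x3→x0→x1 arc x2→x1
    exact absurd (noShort D hdep d2 d3 d0 h02.symm h13.symm d1) id
  · -- T B T B : balanced
    rw [osig_pos D d0, osig_neg D d1, osig_pos D d2, osig_neg D d3]; ring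
  · -- T B B T : dir x0 x1, dir x2 x1, dir x3 x2, dir x3 x0 : back arcs x1x2,x2x3 ... count: f,b,b,f? traversal: x0→x1 f, x1→x2 b, x2→x3 b, x3→x0 f: balanced
    rw [osig_pos D d0, osig_neg D d1, osig_neg D d2, osig_pos D d3]; ring
  · -- T B B B : dir x0 x1, dir x2 x1, dir x3 x2, dir x0 x3: path x0→x3→x2→x1? arc x0→x1
    exact absurd (noShort D hdep d3 d2 d1 h02 h13.symm d0) id
  · -- B T T T : dir x1 x0; path x1→x2→x3→x0, arc x1→x0
    exact absurd (noShort D hdep d1 d2 d3 h13 h02.symm d0) id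
  · -- B T T B : f pattern b,f,f,b balanced
    rw [osig_neg D d0, osig_pos D d1, osig_pos D d2, osig_neg D d3]; ring
  · -- B T B T : balanced
    rw [osig_neg D d0, osig_pos D d1, osig_neg D d2, osig_pos D d3]; ring
  · -- B T B B : dir x1 x0, dir x1 x2, dir x3 x2, dir x0 x3: path x1→x0→x3→x2 arc x1→x2
    exact absurd (noShort D hdep d0 d3 d2 h13 h02 d1) id
  · -- B B T T : balanced
    rw [osig_neg D d0, osig_neg D d1, osig_pos D d2, osig_pos D d3]; ring
  · -- B B T B : dir x1 x0, dir x2 x1, dir x2 x3, dir x0 x3: path x2→x1→x0→x3 arc x2→x3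
    exact absurd (noShort D hdep d1 d0 d3 h02.symm h13 d2) id
  · -- B B B T : dir x1 x0, dir x2 x1, dir x3 x2, dir x3 x0: path x3→x2→x1→x0 arc x3→x0
    exact absurd (noShort D hdep d2 d1 d0 h13.symm h02.symm d3) id
  · -- B B B B : directed cycle backwards
    exact absurd (noC4 D hacy d3 d2 d1 d0) id
end FourCycle

def ver (m : ℕ) (i : ℕ) (a : V) : Option (Fin (m + 1) × V) :=
  some (⟨i % (m+1), Nat.mod_lt _ (Nat.succ_pos m)⟩, a)

lemma ver_val {m i : ℕ} (h : i ≤ m) (a : V) :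
    ((⟨i % (m+1), Nat.mod_lt _ (Nat.succ_pos m)⟩ : Fin (m+1)) : ℕ) = i :=
  Nat.mod_eq_of_lt (by omega)

lemma adj_some_some {G : SimpleGraph V} {m : ℕ} (i j : Fin (m+1)) (a b : V) :
    (genMycielski G m).Adj (some (i,a)) (some (j,b)) ↔
      G.Adj a b ∧ ((i = j ∧ (i : ℕ) = 0) ∨ (i : ℕ) + 1 = (j : ℕ) ∨ (j : ℕ) + 1 = (i : ℕ)) :=
  Iff.rfl

lemma adj_ver_cross {G : SimpleGraph V} {m i : ℕ} (hi : i + 1 ≤ m) {a b : V}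
    (hab : G.Adj a b) : (genMycielski G m).Adj (ver m i a) (ver m (i+1) b) := by
  have h1 : i % (m+1) = i := Nat.mod_eq_of_lt (by omega)
  have h2 : (i+1) % (m+1) = i+1 := Nat.mod_eq_of_lt (by omega)
  show (genMycielski G m).Adj (some (⟨i % (m+1), Nat.mod_lt _ (Nat.succ_pos m)⟩, a))
      (some (⟨(i+1) % (m+1), Nat.mod_lt _ (Nat.succ_pos m)⟩, b))
  rw [adj_some_some]
  refine ⟨hab, Or.inr (Or.inl ?_)⟩
  simp only [h1, h2]

lemma adj_ver_zero {G : SimpleGraph V} {m : ℕ} {a b : V} (hab : G.Adj a b) :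
    (genMycielski G m).Adj (ver m 0 a) (ver m 0 b) := by
  show (genMycielski G m).Adj (some (⟨0 % (m+1), Nat.mod_lt _ (Nat.succ_pos m)⟩, a))
      (some (⟨0 % (m+1), Nat.mod_lt _ (Nat.succ_pos m)⟩, b))
  rw [adj_some_some]
  exact ⟨hab, Or.inl ⟨rfl, ver_val (by omega) a⟩⟩

lemma adj_ver_top {G : SimpleGraph V} {m : ℕ} (a : V) :
    (genMycielski G m).Adj (ver m m a) none := ver_val le_rfl a

lemma ver_ne_ver_level {m i j : ℕ} (hi : i ≤ m) (hj : j ≤ m) (hij : i ≠ j) (a b : V) :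
    ver m i a ≠ ver m j b := by
  intro h
  apply hij
  have := (Option.some_injective _ h)
  have h2 := congrArg (fun p => ((Prod.fst p : Fin (m+1)) : ℕ)) this
  simp only at h2
  rwa [Nat.mod_eq_of_lt (by omega), Nat.mod_eq_of_lt (by omega)] at h2

lemma ver_ne_ver_vertex {m i : ℕ} {a b : V} (hab : a ≠ b) (j : ℕ) :
    ver m i a ≠ ver m j b := by
  intro h
  exact hab (congrArg (fun p => (Prod.snd p : V)) (Option.some_injective _ h))

lemma ver_ne_none {m i : ℕ} (a : V) : ver m i a ≠ none := by simp [ver]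

lemma colorable_of_even (G : SimpleGraph V)
    (hE : ∀ (v : V) (w : G.Walk v v), Even w.length) : G.Colorable 2 := by
  classical
  let r : V → V := fun v => (G.connectedComponentMk v).exists_rep.choose
  have hreach : ∀ v, G.Reachable (r v) v := fun v =>
    SimpleGraph.ConnectedComponent.eq.mp ((G.connectedComponentMk v).exists_rep.choose_spec)
  let wk : ∀ v, G.Walk (r v) v := fun v => (hreach v).some
  let f : V → Fin 2 := fun v => ⟨(wk v).length % 2, Nat.mod_lt _ two_pos⟩
  refine ⟨SimpleGraph.Coloring.mk f ?_⟩
  intro a b hab hf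
  have hr : r a = r b := by
    have hcc : G.connectedComponentMk a = G.connectedComponentMk b :=
      SimpleGraph.ConnectedComponent.sound hab.reachable
    exact congrArg (fun q : G.ConnectedComponent => q.exists_rep.choose) hcc
  have hclosed := hE (r a)
    (((wk a).append (Walk.cons hab Walk.nil)).append (((wk b).copy hr.symm rfl).reverse))
  rw [Walk.length_append, Walk.length_append, Walk.length_reverse, Walk.length_copy] at hclosed
  have hfa : (wk a).length % 2 = (wk b).length % 2 := congrArg Fin.val hf
  simp only [Walk.length_cons, Walk.length_nil] at hclosed
  rw [Nat.even_iff] at hclosed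
  omega

lemma exists_good_cycle (G : SimpleGraph V)
    (h : ∃ (v : V) (w : G.Walk v v), Odd w.length) :
    ∃ (n : ℕ) (c : ℕ → V), Odd n ∧ (∀ j, G.Adj (c j) (c (j+1))) ∧
      (∀ j, c (j + n) = c j) ∧ (∀ j, c j ≠ c (j + 2)) := by
  classical
  obtain ⟨v, w, hw⟩ := h
  -- turn the walk into a periodic function
  have hfun : ∀ (L : ℕ), Odd L → ∀ (v : V) (w : G.Walk v v), w.length = L →
      ∃ c : ℕ → V, (∀ j, G.Adj (c j) (c (j+1))) ∧ (∀ j, c (j + L) = c j) := by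
    intro L hL v w hwL
    have hL1 : 0 < L := hL.pos
    refine ⟨fun i => w.getVert (i % L), ?_, ?_⟩
    · intro j
      have hmod : j % L < L := Nat.mod_lt _ hL1
      have key : (j+1) % L = (j % L + 1) % L := by
        conv_lhs => rw [Nat.add_mod]
        rcases Nat.lt_or_ge 1 L with h1 | h1
        · rw [Nat.mod_eq_of_lt h1]
        · interval_cases L
          simp [Nat.mod_one]
      have hadj := w.adj_getVert_succ (by omega : j % L < w.length)
      show G.Adj (w.getVert (j % L)) (w.getVert ((j+1) % L))
      rcases Nat.lt_or_ge (j % L + 1) L with h2 | h2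
      · rw [key, Nat.mod_eq_of_lt h2]; exact hadj
      · have h3 : j % L + 1 = L := by omega
        have : (j+1) % L = 0 := by rw [key, h3, Nat.mod_self]
        rw [this]
        have : w.getVert (j % L + 1) = w.getVert 0 := by
          rw [h3, ← hwL, w.getVert_length, w.getVert_zero]
        rwa [this] at hadj
    · intro j; simp [Nat.add_mod_right]
  -- minimal odd period
  set S : Set ℕ := {k | Odd k ∧ ∃ c : ℕ → V,
      (∀ j, G.Adj (c j) (c (j+1))) ∧ (∀ j, c (j + k) = c j)} with hS
  have hSne : w.length ∈ S := by
    obtain ⟨c, hc1, hc2⟩ := hfun w.length hw v w rfl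
    exact ⟨hw, c, hc1, hc2⟩
  set n := sInf S with hn
  obtain ⟨hodd, c, hadj, hper⟩ : n ∈ S := Nat.sInf_mem ⟨_, hSne⟩
  refine ⟨n, c, hodd, hadj, hper, ?_⟩
  intro j hj
  -- build a shorter odd closed walk
  have hn1 : n ≠ 1 := by
    intro h1
    have := hper 0
    rw [h1] at this
    exact (hadj 0).ne (by rw [← this])
  have hn3 : 3 ≤ n := by
    rcases hodd with ⟨k, hk⟩
    omega
  set d := n - 2 with hd
  have hdpos : 0 < d := by omega
  set r : ℕ → V := fun i => c (i + (j + 2)) with hr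
  have hradj : ∀ i, G.Adj (r i) (r (i+1)) := by
    intro i
    show G.Adj (c (i + (j+2))) (c (i + 1 + (j + 2)))
    have : i + 1 + (j+2) = (i + (j+2)) + 1 := by ring
    rw [this]; exact hadj _
  have hrd : r d = r 0 := by
    show c (d + (j+2)) = c (0 + (j+2))
    have h1 : d + (j+2) = j + n := by omega
    rw [h1, show j + n = j + n from rfl]
    have := hper j
    rw [this]
    simp [← hj]
  have : d ∈ S := by
    refine ⟨by rcases hodd with ⟨k,hk⟩; exact ⟨k-1, by omega⟩, fun i => r (i % d), ?_, ?_⟩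
    · intro i
      have hmod : i % d < d := Nat.mod_lt _ hdpos
      have key : (i+1) % d = (i % d + 1) % d := by
        conv_lhs => rw [Nat.add_mod]
        rcases Nat.lt_or_ge 1 d with h1 | h1
        · rw [Nat.mod_eq_of_lt h1]
        · interval_cases d
          simp [Nat.mod_one]
      show G.Adj (r (i % d)) (r ((i+1) % d))
      rcases Nat.lt_or_ge (i % d + 1) d with h2 | h2
      · rw [key, Nat.mod_eq_of_lt h2]; exact hradj _
      · have h3 : i % d + 1 = d := by omega
        have h4 : (i+1) % d = 0 := by rw [key, h3, Nat.mod_self]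
        rw [h4]
        have := hradj (i % d)
        rwa [h3, hrd] at this
    · intro i; simp [Nat.add_mod_right]
  have := Nat.sInf_le this
  omega

section Backward
variable {G : SimpleGraph V} {m : ℕ}

noncomputable def hgt (col : G.Coloring (Fin 2)) (m : ℕ) :
    Option (Fin (m + 1) × V) → ℕ := fun x =>
  match x with
  | none => m + 1
  | some (i, a) => if (i : ℕ) = 0 then (if col a = 0 then 0 else 2) else (i : ℕ)

lemma hgt_ne (col : G.Coloring (Fin 2)) (hm : 0 < m)
    {x y : Option (Fin (m+1) × V)} (hxy : (genMycielski G m).Adj x y) :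
    hgt col m x ≠ hgt col m y := by
  match x, y with
  | none, none => exact absurd hxy (by simp [genMycielski])
  | some (i, a), none =>
      have hi : (i : ℕ) = m := hxy
      simp only [hgt]
      rw [if_neg (by omega)]
      omega
  | none, some (j, b) =>
      have hj : (j : ℕ) = m := hxy
      simp only [hgt]
      rw [if_neg (by omega)]
      omega
  | some (i, a), some (j, b) =>
      obtain ⟨hab, hcase⟩ := hxy
      have hcol := col.valid hab
      have hcolv : ∀ z : Fin 2, z = 0 ∨ z = 1 := by decide
      simp only [hgt]
      rcases hcase with ⟨hij, h0⟩ | hij | hij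
      · have hj0 : (j : ℕ) = 0 := by rw [← hij]; exact h0
        rcases hcolv (col a) with ha | ha <;> rcases hcolv (col b) with hb | hb
        · exact absurd (ha.trans hb.symm) hcol
        · rw [if_pos h0, if_pos ha, if_pos hj0,
            if_neg (show ¬(col b = 0) from by rw [hb]; decide)]
          omega
        · rw [if_pos h0, if_neg (show ¬(col a = 0) from by rw [ha]; decide), if_pos hj0,
            if_pos hb]
          omega
        · exact absurd (ha.trans hb.symm) hcol
      · -- i + 1 = j
        by_cases h0 : (i : ℕ) = 0
        · rcases hcolv (col a) with ha | ha
          · rw [if_pos h0, if_pos ha, if_neg (show ¬((j:ℕ) = 0) from by omega)]; omega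
          · rw [if_pos h0, if_neg (show ¬(col a = 0) from by rw [ha]; decide),
              if_neg (show ¬((j:ℕ) = 0) from by omega)]
            omega
        · rw [if_neg h0, if_neg (show ¬((j:ℕ) = 0) from by omega)]; omega
      · -- j + 1 = i
        rw [if_neg (show ¬((i:ℕ) = 0) from by omega)]
        by_cases h0 : (j : ℕ) = 0
        · rcases hcolv (col b) with hb | hb
          · rw [if_pos h0, if_pos hb]; omega
          · rw [if_pos h0, if_neg (show ¬(col b = 0) from by rw [hb]; decide)]; omega
        · rw [if_neg h0]; omega

lemma hgt_none (col : G.Coloring (Fin 2)) : hgt col m none = m + 1 := rfl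

lemma hgt_some (col : G.Coloring (Fin 2)) (i : Fin (m+1)) (a : V) :
    hgt col m (some (i,a)) = if (i : ℕ) = 0 then (if col a = 0 then 0 else 2) else (i : ℕ) := rfl

/-- bounds: the height of a `some` vertex is `0`, `2` (level 0) or its level. -/
lemma hgt_some_cases (col : G.Coloring (Fin 2)) (i : Fin (m+1)) (a : V) :
    ((i : ℕ) = 0 ∧ (col a = 0 ∧ hgt col m (some (i,a)) = 0 ∨
        col a = 1 ∧ hgt col m (some (i,a)) = 2)) ∨
      ((i : ℕ) ≠ 0 ∧ hgt col m (some (i,a)) = (i : ℕ)) := by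
  have hcolv : ∀ z : Fin 2, z = 0 ∨ z = 1 := by decide
  rw [hgt_some]
  by_cases h0 : (i : ℕ) = 0
  · rcases hcolv (col a) with ha | ha
    · exact Or.inl ⟨h0, Or.inl ⟨ha, by rw [if_pos h0, if_pos ha]⟩⟩
    · exact Or.inl ⟨h0, Or.inr ⟨ha, by
        rw [if_pos h0, if_neg (show ¬(col a = 0) from by rw [ha]; decide)]⟩⟩
  · exact Or.inr ⟨h0, by rw [if_neg h0]⟩

lemma key_lemma (col : G.Coloring (Fin 2)) (hm : 0 < m)
    {u v : Option (Fin (m+1) × V)} (huv : (genMycielski G m).Adj u v)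
    (hlt : hgt col m u < hgt col m v) :
    hgt col m v ≤ hgt col m u + 2 ∧
      ∀ w, ((genMycielski G m).Adj u w ∧ hgt col m u < hgt col m w) →
        ((genMycielski G m).Adj w v ∧ hgt col m w < hgt col m v) → False := by
  match u, v with
  | none, none => exact absurd huv (by simp [genMycielski])
  | none, some (j, b) =>
      -- h u = m+1 > h v always: contradiction with hlt
      exfalso
      rcases hgt_some_cases col j b with ⟨_, h2⟩ | ⟨_, h2⟩
      · rcases h2 with ⟨_, h3⟩ | ⟨_, h3⟩ <;> rw [hgt_none, h3] at hlt <;> omega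
      · rw [hgt_none, h2] at hlt
        have := Fin.is_le j
        omega
  | some (i, a), none =>
      -- h u = m, h v = m + 1
      have hi : (i : ℕ) = m := huv
      have hu : hgt col m (some (i,a)) = m := by
        rcases hgt_some_cases col i a with ⟨h1, _⟩ | ⟨_, h2⟩
        · omega
        · rw [h2, hi]
      constructor
      · rw [hgt_none, hu]; omega
      · rintro w ⟨_, hw1⟩ ⟨_, hw2⟩
        rw [hu] at hw1; rw [hgt_none] at hw2; omega
  | some (i, a), some (j, b) =>
      obtain ⟨hab, hcase⟩ := huv
      have hcol := col.valid hab
      have hcolv : ∀ z : Fin 2, z = 0 ∨ z = 1 := by decide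
      rcases hcase with ⟨hij, h0⟩ | hij | hij
      · -- level 0 edge: heights 0 and 2
        have hj0 : (j : ℕ) = 0 := by rw [← hij]; exact h0
        have hua : col a = 0 ∧ hgt col m (some (i,a)) = 0 := by
          rcases hgt_some_cases col i a with ⟨_, hh⟩ | ⟨h1, _⟩
          · rcases hh with hh | ⟨_, h2⟩
            · exact hh
            · exfalso
              rcases hgt_some_cases col j b with ⟨_, hh'⟩ | ⟨h1', _⟩
              · rcases hh' with ⟨_, h3⟩ | ⟨_, h3⟩ <;> rw [h2, h3] at hlt <;> omega
              · exact h1' hj0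
          · exact absurd h0 h1
        have hvb : col b = 1 ∧ hgt col m (some (j,b)) = 2 := by
          rcases hgt_some_cases col j b with ⟨_, hh⟩ | ⟨h1', _⟩
          · rcases hh with ⟨_, h3⟩ | hh
            · exfalso; rw [hua.2, h3] at hlt; omega
            · exact hh
          · exact absurd hj0 h1'
        refine ⟨by rw [hua.2, hvb.2], ?_⟩
        rintro w ⟨haw, hw1⟩ ⟨hwv, hw2⟩
        rw [hua.2] at hw1; rw [hvb.2] at hw2
        have hw : hgt col m w = 1 := by omega
        match w with
        | none => rw [hgt_none] at hw; omega
        | some (k, x) =>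
            have hk : (k : ℕ) ≠ 0 ∧ (k : ℕ) = 1 := by
              rcases hgt_some_cases col k x with ⟨_, hh⟩ | ⟨h1, h2⟩
              · rcases hh with ⟨_, h3⟩ | ⟨_, h3⟩ <;> rw [h3] at hw <;> omega
              · rw [h2] at hw; exact ⟨h1, hw⟩
            have hax : G.Adj a x := haw.1
            have hxb : G.Adj x b := hwv.1
            have h1 := col.valid hax
            have h2 := col.valid hxb
            rcases hcolv (col x) with hx | hx
            · exact h1 (hua.1.trans hx.symm)
            · exact h2 (hx.trans hvb.1.symm)
      · -- i + 1 = j : show gap is exactly 1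
        have hj0 : (j : ℕ) ≠ 0 := by omega
        have hv : hgt col m (some (j,b)) = (i : ℕ) + 1 := by
          rcases hgt_some_cases col j b with ⟨h1, _⟩ | ⟨_, h2⟩
          · exact absurd h1 hj0
          · rw [h2]; omega
        have hu : hgt col m (some (i,a)) = (i : ℕ) ∨
            ((i : ℕ) = 0 ∧ hgt col m (some (i,a)) = 0) := by
          rcases hgt_some_cases col i a with ⟨h1, hh⟩ | ⟨_, h2⟩
          · rcases hh with ⟨_, h3⟩ | ⟨_, h3⟩
            · exact Or.inr ⟨h1, h3⟩
            · exfalso; rw [h3, hv] at hlt; omega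
          · exact Or.inl h2
        have hu' : hgt col m (some (i,a)) = (i : ℕ) := by rcases hu with h | ⟨h1, h2⟩ <;> omega
        refine ⟨by rw [hu', hv]; omega, ?_⟩
        rintro w ⟨_, hw1⟩ ⟨_, hw2⟩
        rw [hu'] at hw1; rw [hv] at hw2; omega
      ·
        -- here hlt : h u < h v with u at level i = j+1 ≥ 1, so h u = i; v at level j
        have hi0 : (i : ℕ) ≠ 0 := by omega
        have hu : hgt col m (some (i,a)) = (i : ℕ) := by
          rcases hgt_some_cases col i a with ⟨h1, _⟩ | ⟨_, h2⟩
          · exact absurd h1 hi0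
          · exact h2
        have hv : hgt col m (some (j,b)) = 2 ∧ (i : ℕ) = 1 := by
          rcases hgt_some_cases col j b with ⟨h1, hh⟩ | ⟨_, h2⟩
          · rcases hh with ⟨_, h3⟩ | ⟨_, h3⟩
            · exfalso; rw [hu, h3] at hlt; omega
            · rw [hu, h3] at hlt; exact ⟨h3, by omega⟩
          · exfalso; rw [hu, h2] at hlt; omega
        refine ⟨by rw [hu, hv.1, hv.2]; omega, ?_⟩
        rintro w ⟨_, hw1⟩ ⟨_, hw2⟩
        rw [hu, hv.2] at hw1; rw [hv.1] at hw2; omega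

end Backward


section Forward
variable {G : SimpleGraph V} {m : ℕ}

noncomputable def AAf (D : Orient (genMycielski G m)) (c : ℕ → V) (i j : ℕ) : ℤ :=
  osig D (ver m i (c j)) (ver m (i+1) (c (j+1)))

noncomputable def BBf (D : Orient (genMycielski G m)) (c : ℕ → V) (i j : ℕ) : ℤ :=
  osig D (ver m i (c (j+1))) (ver m (i+1) (c j))

noncomputable def EEf (D : Orient (genMycielski G m)) (c : ℕ → V) (j : ℕ) : ℤ :=
  osig D (ver m 0 (c j)) (ver m 0 (c (j+1)))

noncomputable def TTf (D : Orient (genMycielski G m)) (c : ℕ → V) (j : ℕ) : ℤ :=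
  osig D (ver m m (c j)) none

noncomputable def FFf (D : Orient (genMycielski G m)) (c : ℕ → V) (n i : ℕ) : ℤ :=
  ∑ j ∈ Finset.range n, (AAf D c i j - BBf D c i j)

lemma osig_antisymm {X : Type*} {M : SimpleGraph X} (D : Orient M) {x y : X}
    (h : M.Adj x y) : osig D x y = - osig D y x := by
  rcases D.adj_dir x y h with hd | hd
  · simp [osig_pos D hd, osig_neg D hd]
  · simp [osig_neg D hd, osig_pos D hd]

lemma sum_shift (n : ℕ) (g : ℕ → ℤ) (hg : g n = g 0) :
    ∑ j ∈ Finset.range n, g (j+1) = ∑ j ∈ Finset.range n, g j := by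
  have h1 := Finset.sum_range_succ' g n
  have h2 := Finset.sum_range_succ g n
  rw [h2] at h1
  omega

lemma sum_pm (g : ℕ → ℤ) (hg : ∀ j, g j = 1 ∨ g j = -1) (k : ℕ) :
    (∑ j ∈ Finset.range k, g j) % 2 = (k : ℤ) % 2 := by
  induction k with
  | zero => simp
  | succ k ih =>
      rw [Finset.sum_range_succ]
      rcases hg k with h | h <;> rw [h] <;> push_cast <;> omega

variable (D : Orient (genMycielski G m)) (c : ℕ → V) {n : ℕ}

lemma AA_per (hper : ∀ j, c (j + n) = c j) (i j : ℕ) : AAf D c i (j + n) = AAf D c i j := by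
  unfold AAf
  rw [show j + n + 1 = (j+1) + n from by ring, hper, hper]

lemma BB_per (hper : ∀ j, c (j + n) = c j) (i j : ℕ) : BBf D c i (j + n) = BBf D c i j := by
  unfold BBf
  rw [show j + n + 1 = (j+1) + n from by ring, hper, hper]

lemma EE_per (hper : ∀ j, c (j + n) = c j) (j : ℕ) : EEf D c (j + n) = EEf D c j := by
  unfold EEf
  rw [show j + n + 1 = (j+1) + n from by ring, hper, hper]

lemma TT_per (hper : ∀ j, c (j + n) = c j) (j : ℕ) : TTf D c (j + n) = TTf D c j := by
  unfold TTf
  rw [hper]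

lemma FF_mid (hacy : IsAcyclicRel D.dir) (hdep : ∀ u v, ¬ DependentArc D.dir u v)
    (hadj : ∀ j, G.Adj (c j) (c (j+1))) (hper : ∀ j, c (j + n) = c j)
    (hne2 : ∀ j, c j ≠ c (j+2)) {i : ℕ} (hi : i + 1 + 1 ≤ m) :
    FFf D c n i = FFf D c n (i+1) := by
  have key : ∀ j, AAf D c i (j+1) + BBf D c (i+1) (j+1) - AAf D c (i+1) j - BBf D c i j = 0 := by
    intro j
    have h01 : (genMycielski G m).Adj (ver m i (c (j+1))) (ver m (i+1) (c (j+1+1))) :=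
      adj_ver_cross (by omega) (hadj (j+1))
    have h12 : (genMycielski G m).Adj (ver m (i+1) (c (j+1+1))) (ver m (i+1+1) (c (j+1))) :=
      adj_ver_cross (by omega) (hadj (j+1)).symm
    have h23 : (genMycielski G m).Adj (ver m (i+1+1) (c (j+1))) (ver m (i+1) (c j)) :=
      (adj_ver_cross (by omega) (hadj j)).symm
    have h30 : (genMycielski G m).Adj (ver m (i+1) (c j)) (ver m i (c (j+1))) :=
      (adj_ver_cross (by omega) (hadj j).symm).symm
    have h02 : ver m i (c (j+1)) ≠ ver m (i+1+1) (c (j+1)) :=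
      ver_ne_ver_level (by omega) (by omega) (by omega) _ _
    have h13 : ver m (i+1) (c (j+1+1)) ≠ ver m (i+1) (c j) :=
      ver_ne_ver_vertex (Ne.symm (hne2 j)) _
    have h4 := four_cycle D hacy hdep h01 h12 h23 h30 h02 h13
    rw [osig_antisymm D h23, osig_antisymm D h30] at h4
    unfold AAf BBf
    linarith [h4]
  have hsum : ∑ j ∈ Finset.range n,
      (AAf D c i (j+1) + BBf D c (i+1) (j+1) - AAf D c (i+1) j - BBf D c i j) = 0 :=
    Finset.sum_eq_zero (fun j _ => key j)
  rw [show (fun j => AAf D c i (j+1) + BBf D c (i+1) (j+1) - AAf D c (i+1) j - BBf D c i j)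
    = fun j => _ from rfl] at hsum
  simp only [Finset.sum_sub_distrib, Finset.sum_add_distrib] at hsum
  have s1 : ∑ j ∈ Finset.range n, AAf D c i (j+1) = ∑ j ∈ Finset.range n, AAf D c i j := by
    apply sum_shift
    have := AA_per D c hper i 0
    rwa [Nat.zero_add] at this
  have s2 : ∑ j ∈ Finset.range n, BBf D c (i+1) (j+1) = ∑ j ∈ Finset.range n, BBf D c (i+1) j := by
    apply sum_shift
    have := BB_per D c hper (i+1) 0
    rwa [Nat.zero_add] at this
  unfold FFf
  simp only [Finset.sum_sub_distrib]
  rw [s1, s2] at hsum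
  linarith [hsum]
lemma FF_top (hacy : IsAcyclicRel D.dir) (hdep : ∀ u v, ¬ DependentArc D.dir u v)
    (hadj : ∀ j, G.Adj (c j) (c (j+1))) (hper : ∀ j, c (j + n) = c j)
    (hne2 : ∀ j, c j ≠ c (j+2)) {i : ℕ} (hi : i + 1 = m) :
    FFf D c n i = 0 := by
  subst hi
  have key : ∀ j, AAf D c i (j+1) + TTf D c (j+1+1) - TTf D c j - BBf D c i j = 0 := by
    intro j
    have h01 : (genMycielski G (i+1)).Adj (ver (i+1) i (c (j+1))) (ver (i+1) (i+1) (c (j+1+1))) :=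
      adj_ver_cross (le_refl (i+1)) (hadj (j+1))
    have h12 : (genMycielski G (i+1)).Adj (ver (i+1) (i+1) (c (j+1+1))) none :=
      adj_ver_top _
    have h23 : (genMycielski G (i+1)).Adj none (ver (i+1) (i+1) (c j)) :=
      (adj_ver_top _).symm
    have h30 : (genMycielski G (i+1)).Adj (ver (i+1) (i+1) (c j)) (ver (i+1) i (c (j+1))) :=
      (adj_ver_cross (le_refl (i+1)) (hadj j).symm).symm
    have h02 : ver (i+1) i (c (j+1)) ≠ none := ver_ne_none _
    have h13 : ver (i+1) (i+1) (c (j+1+1)) ≠ ver (i+1) (i+1) (c j) :=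
      ver_ne_ver_vertex (Ne.symm (hne2 j)) _
    have h4 := four_cycle D hacy hdep h01 h12 h23 h30 h02 h13
    rw [osig_antisymm D h23, osig_antisymm D h30] at h4
    unfold AAf BBf TTf
    linarith [h4]
  have hsum : ∑ j ∈ Finset.range n,
      (AAf D c i (j+1) + TTf D c (j+1+1) - TTf D c j - BBf D c i j) = 0 :=
    Finset.sum_eq_zero (fun j _ => key j)
  simp only [Finset.sum_sub_distrib, Finset.sum_add_distrib] at hsum
  have s1 : ∑ j ∈ Finset.range n, AAf D c i (j+1) = ∑ j ∈ Finset.range n, AAf D c i j := by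
    apply sum_shift
    have := AA_per D c hper i 0
    rwa [Nat.zero_add] at this
  have s2a : ∑ j ∈ Finset.range n, TTf D c (j+1+1) = ∑ j ∈ Finset.range n, TTf D c (j+1) := by
    apply sum_shift (g := fun j => TTf D c (j+1))
    show TTf D c (n+1) = TTf D c (0+1)
    have := TT_per D c hper 1
    rw [Nat.zero_add]
    rw [show n + 1 = 1 + n from by ring]
    exact this
  have s2b : ∑ j ∈ Finset.range n, TTf D c (j+1) = ∑ j ∈ Finset.range n, TTf D c j := by
    apply sum_shift
    have := TT_per D c hper 0
    rwa [Nat.zero_add] at this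
  unfold FFf
  simp only [Finset.sum_sub_distrib]
  rw [s1, s2a, s2b] at hsum
  linarith [hsum]

lemma FF_bot (hacy : IsAcyclicRel D.dir) (hdep : ∀ u v, ¬ DependentArc D.dir u v)
    (hadj : ∀ j, G.Adj (c j) (c (j+1))) (hper : ∀ j, c (j + n) = c j)
    (hne2 : ∀ j, c j ≠ c (j+2)) (hm : 1 ≤ m) :
    FFf D c n 0 = 2 * ∑ j ∈ Finset.range n, EEf D c j := by
  have key : ∀ j, AAf D c 0 j - BBf D c 0 (j+1) - EEf D c (j+1) - EEf D c j = 0 := by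
    intro j
    have h01 : (genMycielski G m).Adj (ver m 0 (c j)) (ver m (0+1) (c (j+1))) :=
      adj_ver_cross (by omega) (hadj j)
    have h12 : (genMycielski G m).Adj (ver m (0+1) (c (j+1))) (ver m 0 (c (j+1+1))) :=
      (adj_ver_cross (by omega) (hadj (j+1)).symm).symm
    have h23 : (genMycielski G m).Adj (ver m 0 (c (j+1+1))) (ver m 0 (c (j+1))) :=
      adj_ver_zero (hadj (j+1)).symm
    have h30 : (genMycielski G m).Adj (ver m 0 (c (j+1))) (ver m 0 (c j)) :=
      adj_ver_zero (hadj j).symm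
    have h02 : ver m 0 (c j) ≠ ver m 0 (c (j+1+1)) := ver_ne_ver_vertex (hne2 j) _
    have h13 : ver m (0+1) (c (j+1)) ≠ ver m 0 (c (j+1)) :=
      ver_ne_ver_level (by omega) (by omega) (by omega) _ _
    have h4 := four_cycle D hacy hdep h01 h12 h23 h30 h02 h13
    rw [osig_antisymm D h12, osig_antisymm D h23, osig_antisymm D h30] at h4
    unfold AAf BBf EEf
    linarith [h4]
  have hsum : ∑ j ∈ Finset.range n,
      (AAf D c 0 j - BBf D c 0 (j+1) - EEf D c (j+1) - EEf D c j) = 0 :=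
    Finset.sum_eq_zero (fun j _ => key j)
  simp only [Finset.sum_sub_distrib] at hsum
  have s1 : ∑ j ∈ Finset.range n, BBf D c 0 (j+1) = ∑ j ∈ Finset.range n, BBf D c 0 j := by
    apply sum_shift
    have := BB_per D c hper 0 0
    rwa [Nat.zero_add] at this
  have s2 : ∑ j ∈ Finset.range n, EEf D c (j+1) = ∑ j ∈ Finset.range n, EEf D c j := by
    apply sum_shift
    have := EE_per D c hper 0
    rwa [Nat.zero_add] at this
  unfold FFf
  simp only [Finset.sum_sub_distrib]
  rw [s1, s2] at hsum
  linarith [hsum]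

lemma colorable_of_cover (G : SimpleGraph V) (m : ℕ) (hm : 0 < m)
    (hcov : IsCoverGraph (genMycielski G m)) : G.Colorable 2 := by
  classical
  by_contra hcol
  have hodd : ∃ (v : V) (w : G.Walk v v), Odd w.length := by
    by_contra hno
    push_neg at hno
    exact hcol (colorable_of_even G (fun v w => Nat.not_odd_iff_even.mp (hno v w)))
  obtain ⟨n, c, hoddn, hadj, hper, hne2⟩ := exists_good_cycle G hodd
  obtain ⟨D, hacy, hdep⟩ := hcov
  have hchain : ∀ d i, i + 1 + d = m → FFf D c n i = 0 := by
    intro d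
    induction d with
    | zero => intro i hi; exact FF_top D c hacy hdep hadj hper hne2 (by omega)
    | succ d ih =>
        intro i hi
        rw [FF_mid D c hacy hdep hadj hper hne2 (by omega)]
        exact ih (i+1) (by omega)
  have h0 : FFf D c n 0 = 0 := hchain (m-1) 0 (by omega)
  rw [FF_bot D c hacy hdep hadj hper hne2 (by omega)] at h0
  have hE0 : ∑ j ∈ Finset.range n, EEf D c j = 0 := by linarith
  have hpm : ∀ j, EEf D c j = 1 ∨ EEf D c j = -1 := by
    intro j
    by_cases h : D.dir (ver m 0 (c j)) (ver m 0 (c (j+1)))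
    · left; exact if_pos h
    · right; exact if_neg h
  have hsp := sum_pm (EEf D c) hpm n
  rw [hE0] at hsp
  rw [Nat.odd_iff] at hoddn
  omega

end Forward

lemma cover_of_colorable (G : SimpleGraph V) (m : ℕ) (hm : 0 < m) (hc : G.Colorable 2) :
    IsCoverGraph (genMycielski G m) := by
  classical
  obtain ⟨col⟩ := hc
  set M := genMycielski G m with hM
  set h : Option (Fin (m+1) × V) → ℕ := hgt col m with hh
  have hd : ∀ x y, (M.Adj x y ∧ h x < h y) → h x < h y := fun _ _ hp => hp.2
  refine ⟨⟨fun x y => M.Adj x y ∧ h x < h y, fun _ _ hp => hp.1, ?_, ?_⟩, ?_, ?_⟩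
  · intro x y hxy
    rcases lt_or_gt_of_ne (hgt_ne col hm hxy) with hl | hl
    · exact Or.inl ⟨hxy, hl⟩
    · exact Or.inr ⟨hxy.symm, hl⟩
  · rintro x y ⟨_, h1⟩ ⟨_, h2⟩; omega
  · exact acyclic_of_height (fun a b hp => hp.2)
  · rintro x y ⟨hxy, hnac⟩
    obtain ⟨h2, hmid⟩ := key_lemma col hm hxy.1 hxy.2
    exact hnac (no_dep (dir := fun x y => M.Adj x y ∧ h x < h y)
      (fun a b hp => hp.2) x y hxy h2 hmid)

theorem genMycielski_coverGraph_iff_bipartite [Finite V] (G : SimpleGraph V)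
    (m : ℕ) (hm : 0 < m) :
    IsCoverGraph (genMycielski G m) ↔ G.Colorable 2 := by
  exact ⟨colorable_of_cover G m hm, cover_of_colorable G m hm⟩
end
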